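/- arXiv:2102.01967 — 7 statements merged into one kernel-verified Lean document; each statement's English description precedes it below -/
import Mathlib

section
/- Let p be a rational prime, r a positive integer, and m ≠ 1 a squarefree rational integer such that F(x) = x^(p^r) − m is irreducible over ℚ. Let α be a complex root of F and K = ℚ(α) with ring of integers Z_K. If ν_p(m^p − m) = 1 (where ν_p denotes the p-adic valuation), then Z_K = ℤ[α]; in particular K is monogenic and α generates a power integral basis of Z_K. -/
open Polynomial NumberField

lemma fermat_aux (p : ℕ) (hp : p.Prime) (m : ℤ) (s : ℕ) : (p : ℤ) ∣ m ^ p ^ s - m := by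
  haveI : Fact p.Prime := ⟨hp⟩
  induction s with
  | zero => simp
  | succ s ih =>
      have h1 : (p : ℤ) ∣ (m ^ p ^ s) ^ p - m ^ p ^ s := by
        have : ((m : ZMod p) ^ p ^ s) ^ p - (m : ZMod p) ^ p ^ s = 0 := by
          rw [ZMod.pow_card]; ring
        have h2 : (((m ^ p ^ s) ^ p - m ^ p ^ s : ℤ) : ZMod p) = 0 := by push_cast; simpa using this
        exact (ZMod.intCast_zmod_eq_zero_iff_dvd _ p).mp h2
      have : m ^ p ^ (s + 1) - m = ((m ^ p ^ s) ^ p - m ^ p ^ s) + (m ^ p ^ s - m) := by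
        rw [pow_succ, pow_mul]; ring
      rw [this]
      exact dvd_add h1 ih

lemma sq_not_dvd_aux (p r : ℕ) (hp : p.Prime) (hr : 0 < r) (m : ℤ)
    (hval : padicValInt p (m ^ p - m) = 1) :
    (p : ℤ) ∣ m ^ p ^ r - m ∧ ¬ ((p : ℤ) ^ 2 ∣ m ^ p ^ r - m) := by
  haveI : Fact p.Prime := ⟨hp⟩
  have hd : (p : ℤ) ∣ m ^ p ^ r - m := fermat_aux p hp m r
  have hne : m ^ p - m ≠ 0 := by
    intro h0
    rw [h0, padicValInt.zero] at hval
    exact absurd hval one_ne_zero.symm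
  have hsq : ¬ ((p : ℤ) ^ 2 ∣ m ^ p - m) := by
    intro h
    have h' : (p : ℕ) ^ 2 ∣ (m ^ p - m).natAbs := by
      have h2 : ((p ^ 2 : ℕ) : ℤ) ∣ m ^ p - m := by exact_mod_cast h
      exact Int.natCast_dvd.mp h2
    have := (padicValNat_dvd_iff_le (p := p) (Int.natAbs_ne_zero.mpr hne)).mp h'
    rw [show padicValNat p (m ^ p - m).natAbs = padicValInt p (m ^ p - m) from rfl, hval] at this
    omega
  have hkey : (p : ℤ) ^ 2 ∣ m ^ p ^ r - m ^ p := by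
    have h1 : (p : ℤ) ∣ m ^ p ^ (r - 1) - m := fermat_aux p hp m (r - 1)
    have h2 := dvd_sub_pow_of_dvd_sub h1 1
    have h3 : (m ^ p ^ (r-1)) ^ p ^ 1 = m ^ p ^ r := by
      rw [← pow_mul]
      congr 1
      rw [← pow_add]
      congr 2
      omega
    rwa [h3, pow_one] at h2
  refine ⟨hd, fun h => hsq ?_⟩
  have heq : m ^ p - m = (m ^ p ^ r - m) - (m ^ p ^ r - m ^ p) := by ring
  rw [heq]
  exact dvd_sub h hkey

/-- **Theorem (Ben Yakkou–El Fadil).** Let `p` be a prime, `r ≥ 1`, and `m ≠ 1` a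
squarefree integer such that `x^(p^r) - m` is irreducible over `ℚ`. Let `K = ℚ(α)`
where `α` is a root of this polynomial. If `ν_p(m^p - m) = 1` then the ring of
integers of `K` is `ℤ[α]`; in particular `α` generates a power integral basis. -/
theorem pure_field_monogenic_of_padicValInt_eq_one
    (p r : ℕ) (hp : p.Prime) (hr : 0 < r) (m : ℤ) (hm : Squarefree m) (hm1 : m ≠ 1)
    (hF : Irreducible ((X : ℚ[X]) ^ p ^ r - C (m : ℚ)))
    (K : Type*) [Field K] [NumberField K] (α : 𝓞 K)
    (hgen : IntermediateField.adjoin ℚ {(α : K)} = ⊤)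
    (hroot : (α : K) ^ p ^ r = (m : K))
    (hval : padicValInt p (m ^ p - m) = 1) :
    Algebra.adjoin ℤ {α} = ⊤ := by
  classical
  haveI : Fact p.Prime := ⟨hp⟩
  set n : ℕ := p ^ r with hn
  have hn0 : n ≠ 0 := pow_ne_zero r hp.pos.ne'
  have hn1 : 1 < n := Nat.one_lt_pow hr.ne' hp.one_lt
  have hm0 : m ≠ 0 := hm.ne_zero
  set x : K := (α : K) with hxdef
  have hxint : IsIntegral ℤ x := RingOfIntegers.isIntegral_coe α
  have hxQ : IsIntegral ℚ x := hxint.tower_top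
  -- minimal polynomials
  have hmq : minpoly ℚ x = X ^ n - C (m : ℚ) := by
    refine (minpoly.eq_of_irreducible_of_monic hF ?_ (monic_X_pow_sub_C _ hn0)).symm
    simp [hroot]
  have hmz : minpoly ℤ x = X ^ n - C m := by
    have h := minpoly.isIntegrallyClosed_eq_field_fractions' ℚ hxint
    apply Polynomial.map_injective (algebraMap ℤ ℚ) (algebraMap ℤ ℚ).injective_int
    rw [← h, hmq]
    simp
  set y : K := x - (m : K) with hydef
  have hmK : (m : K) = algebraMap ℚ K (m : ℚ) := by simp
  have hyint : IsIntegral ℤ y := by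
    refine hxint.sub ?_
    have : (m : K) = algebraMap ℤ K m := by simp
    rw [this]
    exact isIntegral_algebraMap
  have hyQ : IsIntegral ℚ y := hyint.tower_top
  have hyq : minpoly ℚ y = (X ^ n - C (m : ℚ)).comp (X + C (m : ℚ)) := by
    rw [hydef, hmK, minpoly.sub_algebraMap, hmq]
  have hyz : minpoly ℤ y = (X ^ n - C m).comp (X + C m) := by
    have h := minpoly.isIntegrallyClosed_eq_field_fractions' ℚ hyint
    apply Polynomial.map_injective (algebraMap ℤ ℚ) (algebraMap ℤ ℚ).injective_int
    rw [← h, hyq, Polynomial.map_comp]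
    simp
  -- power bases
  let e : IntermediateField.adjoin ℚ ({x} : Set K) ≃ₐ[ℚ] K := (IntermediateField.equivOfEq hgen).trans IntermediateField.topEquiv
  let B : PowerBasis ℚ K := (IntermediateField.adjoin.powerBasis hxQ).map e
  have hBgen : B.gen = x := rfl
  have hxmem : B.gen ∈ Algebra.adjoin ℚ ({y} : Set K) := by
    rw [hBgen]
    have : x = y + algebraMap ℚ K (m : ℚ) := by rw [hydef, hmK]; ring
    rw [this]
    exact Subalgebra.add_mem _ (Algebra.self_mem_adjoin_singleton ℚ y)
      (Subalgebra.algebraMap_mem _ _)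
  let B' : PowerBasis ℚ K := PowerBasis.ofAdjoinEqTop hyQ (PowerBasis.adjoin_eq_top_of_gen_mem_adjoin hxmem)
  have hB'gen : B'.gen = y := rfl
  -- arithmetic input
  obtain ⟨hdvd_n, hnsq⟩ := sq_not_dvd_aux p r hp hr m hval
  -- Eisenstein at primes dividing m
  have heiF : ∀ q : ℤ, Prime q → q ∣ m →
      (minpoly ℤ x).IsEisensteinAt (Ideal.span {q}) := by
    intro q hq hqm
    rw [hmz]
    constructor
    · rw [(monic_X_pow_sub_C m hn0).leadingCoeff]
      intro h
      exact hq.not_unit (isUnit_of_dvd_one (Ideal.mem_span_singleton.mp h))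
    · intro i hi
      rw [natDegree_X_pow_sub_C] at hi
      rw [coeff_sub, coeff_X_pow, coeff_C, if_neg (by omega : ¬ i = n)]
      rcases eq_or_ne i 0 with h0 | h0
      · rw [if_pos h0, Ideal.mem_span_singleton]
        simpa using hqm.neg_right
      · rw [if_neg h0]
        simpa using Ideal.zero_mem _
    · rw [coeff_sub, coeff_X_pow, if_neg (by omega : ¬ (0:ℕ) = n), coeff_C, if_pos rfl,
        Ideal.span_singleton_pow, Ideal.mem_span_singleton, zero_sub, dvd_neg]
      intro h
      exact hq.not_unit (hm q (by rwa [← sq]))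
  -- Eisenstein at p for the shifted generator
  have heiG : (minpoly ℤ y).IsEisensteinAt (Ideal.span {(p : ℤ)}) := by
    have hmonic : ((X ^ n - C m).comp (X + C m)).Monic :=
      (monic_X_pow_sub_C m hn0).comp (monic_X_add_C m) (by rw [natDegree_X_add_C]; exact one_ne_zero)
    have hcompeq : ((X ^ n - C m : ℤ[X]).comp (X + C m)) = (X + C m) ^ n - C m := by
      simp [sub_comp, pow_comp]
    have hdeg : ((X ^ n - C m : ℤ[X]).comp (X + C m)).natDegree = n := by
      rw [natDegree_comp, natDegree_X_pow_sub_C, natDegree_X_add_C, mul_one]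
    have hcoeff : ∀ i, ((X ^ n - C m : ℤ[X]).comp (X + C m)).coeff i =
        m ^ (n - i) * (n.choose i : ℤ) - (if i = 0 then m else 0) := by
      intro i
      rw [hcompeq, coeff_sub, coeff_X_add_C_pow, coeff_C]
    rw [hyz]
    constructor
    · rw [hmonic.leadingCoeff]
      intro h
      exact hp.one_lt.ne' (by
        have := Ideal.mem_span_singleton.mp h
        have h2 : (p : ℤ) ∣ 1 := this
        have := Int.eq_one_of_dvd_one (by positivity) h2
        exact_mod_cast this)
    · intro i hi
      rw [hdeg] at hi
      rw [hcoeff i, Ideal.mem_span_singleton]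
      rcases eq_or_ne i 0 with h0 | h0
      · subst h0
        simpa [Nat.sub_zero] using hdvd_n
      · rw [if_neg h0, sub_zero]
        refine Dvd.dvd.mul_left ?_ _
        exact_mod_cast (Int.natCast_dvd_natCast.mpr (Nat.Prime.dvd_choose_pow hp h0 (by omega)))
    · rw [hcoeff 0, Ideal.span_singleton_pow, Ideal.mem_span_singleton]
      simpa [Nat.sub_zero] using hnsq
  -- key one-prime step
  have Aeq : Algebra.adjoin ℤ ({y} : Set K) = Algebra.adjoin ℤ ({x} : Set K) := by
    apply le_antisymm
    · rw [Algebra.adjoin_le_iff, Set.singleton_subset_iff]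
      refine Subalgebra.sub_mem _ (Algebra.self_mem_adjoin_singleton ℤ x) ?_
      have : (m : K) = algebraMap ℤ K m := by simp
      rw [this]; exact Subalgebra.algebraMap_mem _ _
    · rw [Algebra.adjoin_le_iff, Set.singleton_subset_iff]
      have hx' : x = y + algebraMap ℤ K m := by rw [hydef]; simp
      rw [hx']
      exact Subalgebra.add_mem _ (Algebra.self_mem_adjoin_singleton ℤ y)
        (Subalgebra.algebraMap_mem _ _)
  have key : ∀ q : ℤ, Prime q → (q ∣ (p : ℤ) ∨ q ∣ m) → ∀ z : K, IsIntegral ℤ z →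
      q • z ∈ Algebra.adjoin ℤ ({x} : Set K) → z ∈ Algebra.adjoin ℤ ({x} : Set K) := by
    intro q hq hqor z hz hqz
    rcases hqor with hqp | hqm
    · have hassoc : Associated q (p : ℤ) := hq.associated_of_dvd (Nat.prime_iff_prime_int.mp hp) hqp
      have hspan : (Ideal.span {q} : Ideal ℤ) = Ideal.span {(p : ℤ)} :=
        Ideal.span_singleton_eq_span_singleton.mpr hassoc
      have hei : (minpoly ℤ B'.gen).IsEisensteinAt (Ideal.span {q}) := by
        rw [hB'gen, hspan]
        exact heiG
      have hz' : q • z ∈ Algebra.adjoin ℤ ({B'.gen} : Set K) := by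
        rw [hB'gen, Aeq]; exact hqz
      have := mem_adjoin_of_smul_prime_smul_of_minpoly_isEisensteinAt
        (B := B') hq (hB'gen ▸ hyint) hz hz' hei
      rwa [hB'gen, Aeq] at this
    · have hei : (minpoly ℤ B.gen).IsEisensteinAt (Submodule.span ℤ {q}) := by
        rw [hBgen]; exact heiF q hq hqm
      have hz' : q • z ∈ Algebra.adjoin ℤ ({B.gen} : Set K) := by rw [hBgen]; exact hqz
      have := mem_adjoin_of_smul_prime_smul_of_minpoly_isEisensteinAt
        (B := B) hq (hBgen ▸ hxint) hz hz' hei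
      rwa [hBgen] at this
  -- discriminant computation
  have hdim : B.dim = n := by
    rw [← B.natDegree_minpoly, hBgen, hmq, natDegree_X_pow_sub_C]
  have hfin : Module.finrank ℚ K = n := by rw [B.finrank, hdim]
  have hnormx : Algebra.norm ℚ x = (-1) ^ n * (-(m : ℚ)) := by
    have h := Algebra.PowerBasis.norm_gen_eq_coeff_zero_minpoly B
    rw [hBgen, hmq, hdim] at h
    rw [h]
    congr 1
    rw [coeff_sub, coeff_X_pow, if_neg (by omega : ¬ (0:ℕ) = n), coeff_C, if_pos rfl, zero_sub]
  have hder : aeval x (derivative (minpoly ℚ x)) = algebraMap ℚ K ((n : ℚ)) * x ^ (n - 1) := by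
    rw [hmq]
    simp only [derivative_sub, derivative_C, sub_zero, derivative_X_pow, map_mul, aeval_C,
      map_pow, aeval_X]
  set D : ℤ := (-1) ^ (n * (n - 1) / 2) * ((n : ℤ) ^ n * ((-1) ^ n * (-m)) ^ (n - 1)) with hD
  have hdisc : Algebra.discr ℚ B.basis = (D : ℚ) := by
    rw [Algebra.discr_powerBasis_eq_norm, hBgen, hder, map_mul, Algebra.norm_algebraMap,
      map_pow, hnormx, hfin, hD]
    push_cast
    ring
  have hD0 : D ≠ 0 := by
    have h1 : ((-1 : ℤ)) ^ (n * (n - 1) / 2) ≠ 0 := pow_ne_zero _ (by norm_num)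
    have h2 : ((n : ℤ)) ^ n ≠ 0 := pow_ne_zero _ (by exact_mod_cast hn0)
    have h3 : ((-1 : ℤ) ^ n * (-m)) ^ (n - 1) ≠ 0 :=
      pow_ne_zero _ (mul_ne_zero (pow_ne_zero _ (by norm_num)) (neg_ne_zero.mpr hm0))
    exact mul_ne_zero h1 (mul_ne_zero h2 h3)
  have hDfac : ∀ q : ℤ, Prime q → q ∣ D → q ∣ (p : ℤ) ∨ q ∣ m := by
    intro q hq hqD
    rw [hD] at hqD
    rcases (hq.dvd_mul.mp hqD) with h | h
    · exact absurd (hq.dvd_of_dvd_pow h) (by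
        intro h'
        have := isUnit_of_dvd_unit h' isUnit_one.neg
        exact hq.not_unit this)
    · rcases hq.dvd_mul.mp h with h' | h'
      · left
        have : q ∣ (n : ℤ) := hq.dvd_of_dvd_pow h'
        rw [hn] at this
        push_cast at this
        exact hq.dvd_of_dvd_pow this
      · right
        have h2 := hq.dvd_of_dvd_pow h'
        rcases hq.dvd_mul.mp h2 with h3 | h3
        · exact absurd (hq.dvd_of_dvd_pow h3) (by
            intro h'
            have := isUnit_of_dvd_unit h' isUnit_one.neg
            exact hq.not_unit this)
        · exact (dvd_neg.mp h3)
  -- stripping all prime factors of D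
  have strip : ∀ c : ℤ, c ∣ D → ∀ z : K, IsIntegral ℤ z →
      c • z ∈ Algebra.adjoin ℤ ({x} : Set K) → z ∈ Algebra.adjoin ℤ ({x} : Set K) := by
    intro c
    induction c using UniqueFactorizationMonoid.induction_on_prime with
    | h₁ =>
        intro h
        exact absurd (zero_dvd_iff.mp h) hD0
    | h₂ u hu =>
        intro _ z hz hcz
        rcases Int.isUnit_iff.mp hu with h1 | h1
        · subst h1; simpa using hcz
        · subst h1
          have : z = (-1 : ℤ) • ((-1 : ℤ) • z) := by simp
          rw [this]
          exact Subalgebra.smul_mem _ hcz _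
    | h₃ a q ha hq ih =>
        intro hdvd z hz hcz
        have hqD : q ∣ D := (dvd_mul_right q a).trans hdvd
        have haD : a ∣ D := (dvd_mul_left a q).trans hdvd
        rw [mul_smul] at hcz
        have h1 : a • z ∈ Algebra.adjoin ℤ ({x} : Set K) :=
          key q hq (hDfac q hq hqD) (a • z) (hz.smul a) hcz
        exact ih haD z hz h1
  -- main argument
  have main : ∀ z : K, IsIntegral ℤ z → z ∈ Algebra.adjoin ℤ ({x} : Set K) := by
    intro z hz
    have H := Algebra.discr_mul_isIntegral_mem_adjoin ℚ (hBgen ▸ hxint) hz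
    rw [hBgen, hdisc] at H
    rw [show ((D : ℚ) • z) = D • z from Int.cast_smul_eq_zsmul ℚ D z] at H
    exact strip D dvd_rfl z hz H
  -- conclude in the ring of integers
  apply le_antisymm le_top
  intro w _
  have hw : (w : K) ∈ Algebra.adjoin ℤ ({x} : Set K) :=
    main (w : K) (RingOfIntegers.isIntegral_coe w)
  have himg : Algebra.adjoin ℤ ({x} : Set K) =
      (Algebra.adjoin ℤ ({α} : Set (𝓞 K))).map (algebraMap (𝓞 K) K).toIntAlgHom := by
    rw [AlgHom.map_adjoin, Set.image_singleton]
    rfl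
  rw [himg] at hw
  obtain ⟨w', hw', heq⟩ := hw
  have : w' = w := RingOfIntegers.coe_injective heq
  rwa [this] at hw'
end

section
/- Let r be a positive integer and m ≠ 1 a squarefree rational integer with m ≡ 2 or 3 (mod 4), such that F(x) = x^(2^r) − m is irreducible over ℚ, and let α be a complex root of F and K = ℚ(α). Then ℤ[α] is integrally closed, i.e. ℤ[α] equals the ring of integers of K, for every positive integer r. -/
open Polynomial NumberField

lemma aux_eis_pow_sub_C {n : ℕ} (hn : n ≠ 0) {m p : ℤ} (hp : Prime p)
    (h1 : p ∣ m) (h2 : ¬ p ^ 2 ∣ m) :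
    ((X : ℤ[X]) ^ n - C m).IsEisensteinAt (Submodule.span ℤ {p}) := by
  rw [Ideal.submodule_span_eq]
  constructor
  · rw [(monic_X_pow_sub_C m hn).leadingCoeff]
    rw [Ideal.mem_span_singleton]
    intro h
    exact hp.not_unit (isUnit_of_dvd_one h)
  · intro i hi
    rw [natDegree_X_pow_sub_C] at hi
    rw [coeff_sub, coeff_X_pow, if_neg hi.ne, coeff_C]
    split_ifs with h
    · rw [Ideal.mem_span_singleton]
      simpa using h1
    · simp
  · rw [coeff_sub, coeff_X_pow, if_neg (Ne.symm hn), Ideal.span_singleton_pow,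
      Ideal.mem_span_singleton]
    simpa using h2

lemma aux_eis_shift {r : ℕ} (hr : 0 < r) {m : ℤ} (hmod : m % 4 = 3) :
    (((X : ℤ[X]) - C 1) ^ 2 ^ r - C m).IsEisensteinAt (Submodule.span ℤ {(2 : ℤ)}) := by
  have hn0 : (2 : ℕ) ^ r ≠ 0 := by positivity
  have heven : Even (2 ^ r) := (Nat.even_pow).2 ⟨even_two, hr.ne'⟩
  have hXC : ((X : ℤ[X]) - C 1) = X + C (-1) := by
    have : (C (-1) : ℤ[X]) = -1 := by simp
    rw [this, map_one]; ring
  have hmon : (((X : ℤ[X]) - C 1) ^ 2 ^ r).Monic := ((monic_X_sub_C 1).pow _)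
  have hdeg : (((X : ℤ[X]) - C 1) ^ 2 ^ r).natDegree = 2 ^ r := by
    rw [natDegree_pow, natDegree_X_sub_C, mul_one]
  have hmonic : (((X : ℤ[X]) - C 1) ^ 2 ^ r - C m).Monic := by
    apply hmon.sub_of_left
    apply lt_of_le_of_lt (degree_C_le)
    rw [degree_eq_natDegree hmon.ne_zero, hdeg]
    exact_mod_cast pow_pos (by norm_num : (0:ℕ) < 2) r
  have hcoeff : ∀ k, (((X : ℤ[X]) - C 1) ^ 2 ^ r).coeff k
      = (-1) ^ (2 ^ r - k) * ((2 ^ r).choose k : ℤ) := by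
    intro k
    rw [hXC, coeff_X_add_C_pow]
  have hnatdeg : (((X : ℤ[X]) - C 1) ^ 2 ^ r - C m).natDegree = 2 ^ r := by
    rw [natDegree_sub_C, hdeg]
  rw [Ideal.submodule_span_eq]
  constructor
  · rw [hmonic.leadingCoeff, Ideal.mem_span_singleton]
    norm_num
  · intro i hi
    rw [hnatdeg] at hi
    rw [coeff_sub, hcoeff, coeff_C, Ideal.mem_span_singleton]
    rcases Nat.eq_zero_or_pos i with rfl | hi0
    · simp only [if_pos rfl, Nat.choose_zero_right, Nat.sub_zero, Nat.cast_one, mul_one]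
      rw [heven.neg_one_pow]
      show (2:ℤ) ∣ 1 - m
      omega
    · rw [if_neg hi0.ne']
      have : (2 : ℕ) ∣ (2 ^ r).choose i := by
        have := Nat.Prime.dvd_choose_pow (n := r) (k := i) Nat.prime_two hi0.ne' hi.ne
        simpa using this
      rw [sub_zero]
      exact Dvd.dvd.mul_left (by exact_mod_cast Int.natCast_dvd_natCast.2 this) _
  · rw [coeff_sub, hcoeff, coeff_C, if_pos rfl, Nat.choose_zero_right, Nat.sub_zero,
      Nat.cast_one, mul_one, heven.neg_one_pow, Ideal.span_singleton_pow,
      Ideal.mem_span_singleton]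
    intro h
    omega

/-- If `m ≠ 1` is squarefree with `m ≡ 2` or `3 (mod 4)` and `x^(2^r) - m` is
irreducible over `ℚ`, then for `K = ℚ(α)` with `α` a root, `ℤ[α]` is integrally
closed, i.e. it equals the ring of integers of `K`. -/
theorem pure_two_power_field_integrally_closed
    (r : ℕ) (hr : 0 < r) (m : ℤ) (hm : Squarefree m) (hm1 : m ≠ 1)
    (hmod : m % 4 = 2 ∨ m % 4 = 3)
    (hF : Irreducible ((X : ℚ[X]) ^ 2 ^ r - C (m : ℚ)))
    (K : Type*) [Field K] [NumberField K] (α : 𝓞 K)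
    (hgen : IntermediateField.adjoin ℚ {(α : K)} = ⊤)
    (hroot : (α : K) ^ 2 ^ r = (m : K)) :
    Algebra.adjoin ℤ {α} = ⊤ := by
  classical
  have hn0 : (2:ℕ) ^ r ≠ 0 := by positivity
  have heven : Even ((2:ℕ) ^ r) := (Nat.even_pow).2 ⟨even_two, hr.ne'⟩
  set n := 2 ^ r with hn
  set αK : K := (α : K) with hαK
  have hαint : IsIntegral ℤ αK := RingOfIntegers.isIntegral_coe α
  have hα : IsIntegral ℚ αK := hαint.tower_top
  have hmonic : ((X : ℚ[X]) ^ n - C (m : ℚ)).Monic := monic_X_pow_sub_C _ hn0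
  have haev : aeval αK ((X : ℚ[X]) ^ n - C (m : ℚ)) = 0 := by
    simp [sub_eq_zero, hroot]
  have hminQ : minpoly ℚ αK = (X : ℚ[X]) ^ n - C (m : ℚ) :=
    (minpoly.eq_of_irreducible_of_monic hF haev hmonic).symm
  have hminZ : minpoly ℤ αK = (X : ℤ[X]) ^ n - C m := by
    apply Polynomial.map_injective (algebraMap ℤ ℚ) (RingHom.injective_int _)
    rw [← minpoly.isIntegrallyClosed_eq_field_fractions' ℚ hαint, hminQ]
    simp
  -- power basis generated by αK
  have hgen' : Algebra.adjoin ℚ {αK} = ⊤ := by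
    rw [← IntermediateField.adjoin_simple_toSubalgebra_of_isAlgebraic hα.isAlgebraic, hgen]
    rfl
  let B : PowerBasis ℚ K := (Algebra.adjoin.powerBasis hα).map
    ((Subalgebra.equivOfEq _ _ hgen').trans Subalgebra.topEquiv)
  have hBgen : B.gen = αK := by simp [B]
  have hBdim : B.dim = n := by
    rw [← B.natDegree_minpoly, hBgen, hminQ, natDegree_X_pow_sub_C]
  have hfinrank : Module.finrank ℚ K = n := by rw [B.finrank, hBdim]
  -- the shifted generator β = α + 1
  set β : K := αK + 1 with hβdef
  have hβint : IsIntegral ℤ β := hαint.add isIntegral_one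
  have hβ : IsIntegral ℚ β := hβint.tower_top
  have hmemβ : B.gen ∈ Algebra.adjoin ℚ ({β} : Set K) := by
    rw [hBgen, show αK = β - 1 by rw [hβdef]; ring]
    exact Subalgebra.sub_mem _ (Algebra.self_mem_adjoin_singleton ℚ β)
      (Subalgebra.one_mem _)
  let B' : PowerBasis ℚ K := PowerBasis.ofAdjoinEqTop hβ (PowerBasis.adjoin_eq_top_of_gen_mem_adjoin hmemβ)
  have hB'gen : B'.gen = β := by simp [B']
  have hadjβ : Algebra.adjoin ℤ ({β} : Set K) = Algebra.adjoin ℤ ({αK} : Set K) := by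
    apply le_antisymm
    · rw [Algebra.adjoin_le_iff]
      rintro x rfl
      exact Subalgebra.add_mem _ (Algebra.self_mem_adjoin_singleton ℤ αK)
        (Subalgebra.one_mem _)
    · rw [Algebra.adjoin_le_iff]
      rintro x rfl
      rw [show αK = β - 1 by rw [hβdef]; ring]
      exact Subalgebra.sub_mem _ (Algebra.self_mem_adjoin_singleton ℤ β)
        (Subalgebra.one_mem _)
  -- minpoly of β
  have hgQmonic : (((X : ℚ[X]) - C 1) ^ n - C (m : ℚ)).Monic := by
    apply ((monic_X_sub_C (1:ℚ)).pow n).sub_of_left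
    apply lt_of_le_of_lt (degree_C_le)
    rw [degree_eq_natDegree ((monic_X_sub_C (1:ℚ)).pow n).ne_zero, natDegree_pow,
      natDegree_X_sub_C, mul_one]
    exact_mod_cast pow_pos (by norm_num : (0:ℕ) < 2) r
  have haevβ : aeval β (((X : ℚ[X]) - C 1) ^ n - C (m : ℚ)) = 0 := by
    simp only [map_sub, map_pow, aeval_X, aeval_C]
    rw [show β - algebraMap ℚ K 1 = αK by rw [hβdef]; simp]
    simp [sub_eq_zero, hroot]
  have hminQβ : minpoly ℚ β = ((X : ℚ[X]) - C 1) ^ n - C (m : ℚ) := by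
    refine (eq_of_monic_of_dvd_of_natDegree_le (minpoly.monic hβ) hgQmonic
      (minpoly.dvd ℚ β haevβ) ?_).symm
    rw [natDegree_sub_C, natDegree_pow, natDegree_X_sub_C, mul_one]
    rw [show (minpoly ℚ β).natDegree = B'.dim by rw [← hB'gen, B'.natDegree_minpoly],
      ← B'.finrank, hfinrank]
  have hminZβ : minpoly ℤ β = ((X : ℤ[X]) - C 1) ^ n - C m := by
    apply Polynomial.map_injective (algebraMap ℤ ℚ) (RingHom.injective_int _)
    rw [← minpoly.isIntegrallyClosed_eq_field_fractions' ℚ hβint, hminQβ]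
    simp
  -- the key descent lemma for a single prime
  have main : ∀ p : ℤ, Prime p → 0 ≤ p → (p ∣ m ∨ p = 2) → ∀ z : K, IsIntegral ℤ z →
      p • z ∈ Algebra.adjoin ℤ ({αK} : Set K) → z ∈ Algebra.adjoin ℤ ({αK} : Set K) := by
    intro p hp hp0 hpm z hz hpz
    by_cases hdvd : p ∣ m
    · have hsq : ¬ p ^ 2 ∣ m := by
        intro h
        exact hp.not_unit (hm p (by rwa [← pow_two]))
      have hei : (minpoly ℤ B.gen).IsEisensteinAt (Submodule.span ℤ {p}) := by
        rw [hBgen, hminZ]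
        exact aux_eis_pow_sub_C hn0 hp hdvd hsq
      have := mem_adjoin_of_smul_prime_smul_of_minpoly_isEisensteinAt
        (B := B) hp (hBgen ▸ hαint) hz (by rwa [hBgen]) hei
      rwa [hBgen] at this
    · have hp2 : p = 2 := hpm.resolve_left hdvd
      subst hp2
      have hmod3 : m % 4 = 3 := by
        rcases hmod with h | h
        · exfalso; exact hdvd (by omega)
        · exact h
      have hei : (minpoly ℤ B'.gen).IsEisensteinAt (Submodule.span ℤ {(2:ℤ)}) := by
        rw [hB'gen, hminZβ]
        exact aux_eis_shift hr hmod3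
      have := mem_adjoin_of_smul_prime_smul_of_minpoly_isEisensteinAt
        (B := B') hp (hB'gen ▸ hβint) hz (by rw [hB'gen, hadjβ]; exact hpz) hei
      rwa [hB'gen, hadjβ] at this
  -- iterate over all prime factors
  have chain : ∀ (N : ℕ) (c : ℤ), c.natAbs ≤ N → c ≠ 0 →
      (∀ p : ℤ, Prime p → 0 ≤ p → p ∣ c → (p ∣ m ∨ p = 2)) →
      ∀ z : K, IsIntegral ℤ z → c • z ∈ Algebra.adjoin ℤ ({αK} : Set K) →
        z ∈ Algebra.adjoin ℤ ({αK} : Set K) := by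
    intro N
    induction N with
    | zero => intro c hc hc0; omega
    | succ N ih =>
      intro c hc hc0 hfac z hz hcz
      by_cases hcu : IsUnit c
      · rcases Int.isUnit_iff.1 hcu with rfl | rfl
        · simpa using hcz
        · have : -((-1 : ℤ) • z) ∈ Algebra.adjoin ℤ ({αK} : Set K) :=
            Subalgebra.neg_mem _ hcz
          simpa using this
      · obtain ⟨p, hp, hpc⟩ := Int.exists_prime_and_dvd (fun h => hcu (Int.isUnit_iff_natAbs_eq.2 h))
        -- replace p by its absolute value
        set q : ℤ := (p.natAbs : ℤ) with hq
        have hpnat : Nat.Prime p.natAbs := Int.prime_iff_natAbs_prime.1 hp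
        have hqprime : Prime q := Nat.prime_iff_prime_int.mp hpnat
        have hq0 : 0 ≤ q := Int.natCast_nonneg _
        have hqc : q ∣ c := (Int.natAbs_dvd).2 hpc
        obtain ⟨d, rfl⟩ := hqc
        have hd0 : d ≠ 0 := by rintro rfl; simp at hc0
        have hq2 : 2 ≤ q.natAbs := by
          rw [hq, Int.natAbs_natCast]
          exact hpnat.two_le
        have hdN : d.natAbs ≤ N := by
          rw [Int.natAbs_mul] at hc
          have : d.natAbs ≠ 0 := Int.natAbs_ne_zero.2 hd0
          nlinarith [hc, hq2, this]
        have hdz : d • z ∈ Algebra.adjoin ℤ ({αK} : Set K) := by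
          apply main q hqprime hq0 (hfac q hqprime hq0 ⟨d, rfl⟩) (d • z) (hz.smul d)
          rwa [← mul_smul]
        exact ih d hdN hd0
          (fun p hp hp0 hpd => hfac p hp hp0 (hpd.mul_left q)) z hz hdz
  -- the discriminant
  set d : ℤ := (-1) ^ (n * (n - 1) / 2) * (n : ℤ) ^ n * (-m) ^ (n - 1) with hd
  have hm0 : m ≠ 0 := by rintro rfl; exact not_squarefree_zero hm
  have hd0 : d ≠ 0 := by
    apply mul_ne_zero (mul_ne_zero (pow_ne_zero _ (by norm_num)) (pow_ne_zero _ (by positivity)))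
    exact pow_ne_zero _ (neg_ne_zero.2 hm0)
  have hnormα : Algebra.norm ℚ αK = -(m : ℚ) := by
    rw [← hBgen, Algebra.PowerBasis.norm_gen_eq_coeff_zero_minpoly, hBgen, hminQ, hBdim,
      coeff_sub, coeff_X_pow, if_neg (Ne.symm hn0), coeff_C_zero]
    rw [heven.neg_one_pow]
    ring
  have hdisc : Algebra.discr ℚ B.basis = (d : ℚ) := by
    rw [Algebra.discr_powerBasis_eq_norm, hBgen, hminQ]
    rw [derivative_sub, derivative_C, sub_zero, derivative_X_pow]
    rw [map_mul, aeval_C, map_pow, aeval_X]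
    rw [map_mul (Algebra.norm ℚ), Algebra.norm_algebraMap, map_pow, hnormα, hfinrank]
    rw [hd]
    push_cast
    ring
  have hfac : ∀ p : ℤ, Prime p → 0 ≤ p → p ∣ d → (p ∣ m ∨ p = 2) := by
    intro p hp hp0 hpd
    rw [hd] at hpd
    rcases hp.dvd_mul.1 hpd with h | h
    · rcases hp.dvd_mul.1 h with h' | h'
      · exfalso
        have := hp.dvd_of_dvd_pow h'
        rw [dvd_neg] at this
        exact hp.not_unit (isUnit_of_dvd_one this)
      · right
        have h2 : p ∣ (2 : ℤ) := by
          have : ((n : ℤ)) = (2 : ℤ) ^ r := by rw [hn]; push_cast; ring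
          exact hp.dvd_of_dvd_pow (this ▸ hp.dvd_of_dvd_pow h')
        have hna : p.natAbs ∣ 2 := by
          have := Int.natAbs_dvd_natAbs.2 h2
          simpa using this
        have h2le : 2 ≤ p.natAbs := (Int.prime_iff_natAbs_prime.1 hp).two_le
        have := Nat.le_of_dvd (by norm_num) hna
        omega
    · left
      have := hp.dvd_of_dvd_pow h
      rwa [dvd_neg] at this
  -- every integral element lies in ℤ[α]
  have hmem : ∀ z : K, IsIntegral ℤ z → z ∈ Algebra.adjoin ℤ ({αK} : Set K) := by
    intro z hz
    have H := Algebra.discr_mul_isIntegral_mem_adjoin ℚ (B := B) (hBgen ▸ hαint) hz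
    rw [hdisc, hBgen] at H
    have H' : d • z ∈ Algebra.adjoin ℤ ({αK} : Set K) := by
      rwa [Int.cast_smul_eq_zsmul] at H
    exact chain d.natAbs d le_rfl hd0 hfac z hz H'
  -- conclude
  rw [_root_.eq_top_iff]
  intro z _
  have hz := hmem (z : K) (RingOfIntegers.isIntegral_coe z)
  have himg : Algebra.adjoin ℤ ({αK} : Set K)
      = (Algebra.adjoin ℤ ({α} : Set (𝓞 K))).map (IsScalarTower.toAlgHom ℤ (𝓞 K) K) := by
    rw [AlgHom.map_adjoin]
    congr 1
    simp [hαK]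
  rw [himg] at hz
  obtain ⟨w, hw, hw2⟩ := hz
  have : w = z := RingOfIntegers.coe_injective hw2
  rwa [← this]
end

section
/- Let r be a positive integer and m ≠ 1 a squarefree rational integer with m ≢ 1 (mod 9) and m ≢ −1 (mod 9), such that F(x) = x^(3^r) − m is irreducible over ℚ. Let α be a complex root of F and K = ℚ(α). Then K is monogenic. -/
open Polynomial NumberField

/-- If `m ≠ 1` is squarefree with `m ≢ ±1 (mod 9)` and `x^(3^r) - m` is irreducible
over `ℚ`, then `K = ℚ(α)` is monogenic, where `α` is a root. -/
theorem pure_three_power_field_monogenic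
    (r : ℕ) (hr : 0 < r) (m : ℤ) (hm : Squarefree m) (hm1 : m ≠ 1)
    (hmod1 : ¬ m ≡ 1 [ZMOD 9]) (hmod2 : ¬ m ≡ -1 [ZMOD 9])
    (hF : Irreducible ((X : ℚ[X]) ^ 3 ^ r - C (m : ℚ)))
    (K : Type*) [Field K] [NumberField K] (α : K)
    (hgen : IntermediateField.adjoin ℚ {α} = ⊤)
    (hroot : α ^ 3 ^ r = (m : K)) :
    ∃ θ : 𝓞 K, Algebra.adjoin ℤ {θ} = ⊤ := by
  set n := 3 ^ r with hn
  have hn0 : n ≠ 0 := pow_ne_zero r (by norm_num)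
  have hn1 : 1 ≤ n := Nat.one_le_iff_ne_zero.2 hn0
  have hodd : Odd n := Odd.pow (by decide)
  -- α is integral over ℤ
  have hint : IsIntegral ℤ α := by
    refine ⟨X ^ n - C m, monic_X_pow_sub_C m hn0, ?_⟩
    simp only [eval₂_sub, eval₂_X_pow, eval₂_C, hroot]
    simp
  -- minpoly over ℚ
  have hmQ : minpoly ℚ α = X ^ n - C (m : ℚ) := by
    refine (minpoly.eq_of_irreducible_of_monic hF ?_ (monic_X_pow_sub_C _ hn0)).symm
    simp [hroot]
  -- minpoly of α + c over ℚ and over ℤ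
  have hmQc : ∀ c : ℤ, minpoly ℚ (α + (c : K)) = ((X : ℚ[X]) - C (c : ℚ)) ^ n - C (m : ℚ) := by
    intro c
    have h := minpoly.add_algebraMap (A := ℚ) α ((c : ℚ))
    rw [hmQ] at h
    rw [show ((c : K)) = algebraMap ℚ K ((c : ℚ)) by simp]
    rw [h, sub_comp, X_pow_comp, C_comp]
  have hmZc : ∀ c : ℤ, minpoly ℤ (α + (c : K)) = ((X : ℤ[X]) - C c) ^ n - C m := by
    intro c
    have hci : IsIntegral ℤ (α + (c : K)) := by
      refine hint.add ?_
      have := isIntegral_algebraMap (R := ℤ) (A := K) (x := c)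
      simpa using this
    have hmap := minpoly.isIntegrallyClosed_eq_field_fractions' ℚ hci
    rw [hmQc c] at hmap
    apply Polynomial.map_injective (algebraMap ℤ ℚ)
      (fun a b hab => by exact_mod_cast hab)
    rw [← hmap]
    simp [Polynomial.map_sub, Polynomial.map_pow]
  -- α + c generates K over ℚ
  have hgenc : ∀ c : ℤ, IntermediateField.adjoin ℚ {α + (c : K)} = ⊤ := by
    intro c
    rw [eq_top_iff, ← hgen, IntermediateField.adjoin_le_iff]
    intro x hx
    rw [Set.mem_singleton_iff] at hx
    rw [hx]
    have h1 : α + (c : K) ∈ IntermediateField.adjoin ℚ {α + (c : K)} :=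
      IntermediateField.mem_adjoin_simple_self ℚ _
    have h2 : ((c : K)) ∈ IntermediateField.adjoin ℚ {α + (c : K)} :=
      intCast_mem _ c
    simpa using sub_mem h1 h2
  -- power bases
  let Bc : ℤ → PowerBasis ℚ K := fun c =>
    (IntermediateField.adjoin.powerBasis (IsIntegral.of_finite ℚ (α + (c : K)))).map
      ((IntermediateField.equivOfEq (hgenc c)).trans IntermediateField.topEquiv)
  have hBgen : ∀ c : ℤ, (Bc c).gen = α + (c : K) := by
    intro c
    rfl
  -- shifting the generator does not change the adjoined ring
  have hadj : ∀ c : ℤ, Algebra.adjoin ℤ {α + (c : K)} = Algebra.adjoin ℤ {α} := by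
    intro c
    apply le_antisymm
    · rw [Algebra.adjoin_le_iff]
      intro x hx
      rw [Set.mem_singleton_iff] at hx
      rw [hx]
      exact add_mem (Algebra.self_mem_adjoin_singleton ℤ α) (intCast_mem _ c)
    · rw [Algebra.adjoin_le_iff]
      intro x hx
      rw [Set.mem_singleton_iff] at hx
      rw [hx]
      have := sub_mem (Algebra.self_mem_adjoin_singleton ℤ (α + (c : K)))
        (intCast_mem (Algebra.adjoin ℤ {α + (c : K)}) c)
      simpa using this
  -- the key stripping lemma via Eisenstein polynomials
  have strip : ∀ (c p : ℤ), Prime p →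
      (minpoly ℤ (α + (c : K))).IsEisensteinAt (Ideal.span {p}) →
      ∀ (k : ℕ) (z : K), IsIntegral ℤ z → p ^ k • z ∈ Algebra.adjoin ℤ {α} →
      z ∈ Algebra.adjoin ℤ {α} := by
    intro c p hp hei k z hz hmem
    rw [← hadj c] at hmem ⊢
    have hBint : IsIntegral ℤ (Bc c).gen := by
      rw [hBgen c]
      refine hint.add ?_
      simpa using isIntegral_algebraMap (R := ℤ) (A := K) (x := c)
    have h := mem_adjoin_of_smul_prime_pow_smul_of_minpoly_isEisensteinAt
      (B := Bc c) hp hBint hz (n := k) ?_ ?_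
    · rwa [hBgen c] at h
    · rwa [hBgen c]
    · rwa [hBgen c]
  -- Eisenstein criterion for (X - C c)^n - C m
  have eis : ∀ (c p : ℤ), Prime p →
      (∀ k : ℕ, 0 < k → k < n → p ∣ (-c) ^ (n - k) * (n.choose k : ℤ)) →
      p ∣ ((-c) ^ n - m) → ¬ p ^ 2 ∣ ((-c) ^ n - m) →
      (((X : ℤ[X]) - C c) ^ n - C m).IsEisensteinAt (Ideal.span {p}) := by
    intro c p hp hdvd h0 h0'
    have hXc : ((X : ℤ[X]) - C c) = X + C (-c) := by rw [map_neg, sub_eq_add_neg]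
    have hmon : (((X : ℤ[X]) - C c) ^ n - C m).Monic := by
      have h1 : (((X : ℤ[X]) - C c) ^ n).Monic := (monic_X_sub_C c).pow n
      have h2 : degree (C m : ℤ[X]) < degree (((X : ℤ[X]) - C c) ^ n) := by
        rw [degree_pow, degree_X_sub_C]
        refine lt_of_le_of_lt degree_C_le ?_
        simp only [nsmul_eq_mul, mul_one]
        exact_mod_cast Nat.pos_of_ne_zero hn0
      simpa [sub_eq_add_neg] using h1.add_of_left (by simpa using h2)
    have hdeg : (((X : ℤ[X]) - C c) ^ n - C m).natDegree = n := by
      rw [natDegree_sub_C, natDegree_pow, natDegree_X_sub_C, mul_one]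
    have hcoeff : ∀ k : ℕ, k < n →
        (((X : ℤ[X]) - C c) ^ n - C m).coeff k =
          (-c) ^ (n - k) * (n.choose k : ℤ) - if k = 0 then m else 0 := by
      intro k hk
      rw [coeff_sub, hXc, coeff_X_add_C_pow, coeff_C]
    constructor
    · rw [hmon.leadingCoeff]
      rw [Ideal.mem_span_singleton]
      intro h
      exact hp.not_unit (isUnit_of_dvd_one h)
    · intro k hk
      rw [hdeg] at hk
      rw [hcoeff k hk, Ideal.mem_span_singleton]
      rcases Nat.eq_zero_or_pos k with hk0 | hk0
      · subst hk0
        simpa using h0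
      · rw [if_neg (Nat.pos_iff_ne_zero.1 hk0), sub_zero]
        exact hdvd k hk0 hk
    · rw [hcoeff 0 (Nat.pos_of_ne_zero hn0), Ideal.span_singleton_pow,
        Ideal.mem_span_singleton]
      simpa using h0'
  have hsq9 : ¬ (9:ℤ) ∣ m := by
    intro h
    have h33 : (3:ℤ) * 3 ∣ m := by norm_num at h ⊢; exact h
    exact (by decide : ¬ IsUnit (3:ℤ)) (hm 3 h33)
  obtain ⟨c, hceq, hc3, hc9⟩ : ∃ c : ℤ, (-c) ^ n - m = -(m + c) ∧ (3:ℤ) ∣ m + c ∧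
      ¬ (9:ℤ) ∣ m + c := by
    have h1 : ¬ (9:ℤ) ∣ 1 - m := fun h => hmod1 ((Int.modEq_iff_dvd).2 h)
    have h2 : ¬ (9:ℤ) ∣ -1 - m := fun h => hmod2 ((Int.modEq_iff_dvd).2 h)
    by_cases h3 : (3:ℤ) ∣ m
    · exact ⟨0, by simp [zero_pow hn0], by simpa using h3, by simpa using hsq9⟩
    · rcases (by omega : m % 3 = 1 ∨ m % 3 = 2) with h | h
      · refine ⟨-1, by norm_num; ring, by omega, by omega⟩
      · refine ⟨1, by rw [hodd.neg_one_pow]; ring, by omega, by omega⟩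
  have hei3 : (minpoly ℤ (α + (c : K))).IsEisensteinAt (Ideal.span {3}) := by
    rw [hmZc c]
    refine eis c 3 Int.prime_three ?_ ?_ ?_
    · intro k hk0 hkn
      refine Dvd.dvd.mul_left ?_ _
      have : (3:ℕ) ∣ n.choose k := by
        rw [hn]
        exact Nat.Prime.dvd_choose_pow Nat.prime_three (Nat.pos_iff_ne_zero.1 hk0)
          (by omega)
      exact_mod_cast Int.natCast_dvd_natCast.2 this
    · rw [hceq]
      exact dvd_neg.2 hc3
    · rw [hceq]
      intro h
      exact hc9 (by have := dvd_neg.1 h; norm_num at this ⊢; exact this)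
  have heip : ∀ p : ℤ, Prime p → p ∣ m →
      (minpoly ℤ (α + ((0:ℤ) : K))).IsEisensteinAt (Ideal.span {p}) := by
    intro p hp hpm
    rw [hmZc 0]
    refine eis 0 p hp ?_ ?_ ?_
    · intro k hk0 hkn
      refine dvd_mul_of_dvd_left ?_ _
      rw [neg_zero, zero_pow (by omega : n - k ≠ 0)]
      exact dvd_zero p
    · rw [neg_zero, zero_pow hn0, zero_sub]
      exact dvd_neg.2 hpm
    · rw [neg_zero, zero_pow hn0, zero_sub]
      intro h
      have hpp : p * p ∣ m := by
        have := dvd_neg.1 h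
        rwa [pow_two] at this
      exact hp.not_unit (hm p hpp)
  have stripM : ∀ (a : ℤ) (k : ℕ) (z : K), a ∣ m → IsIntegral ℤ z →
      a ^ k • z ∈ Algebra.adjoin ℤ {α} → z ∈ Algebra.adjoin ℤ {α} := by
    intro a
    refine UniqueFactorizationMonoid.induction_on_prime
      (P := fun a : ℤ => ∀ (k : ℕ) (z : K), a ∣ m → IsIntegral ℤ z →
        a ^ k • z ∈ Algebra.adjoin ℤ {α} → z ∈ Algebra.adjoin ℤ {α}) a ?_ ?_ ?_
    · intro k z hdvd _ _
      exfalso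
      have hm0 : m = 0 := zero_dvd_iff.1 hdvd
      rw [hm0] at hm
      exact not_squarefree_zero hm
    · intro x hx k z _ _ hmem
      obtain ⟨b, hb⟩ := isUnit_iff_exists_inv.1 hx
      have hz' : z = b ^ k • (x ^ k • z) := by
        rw [← mul_smul, ← mul_pow, mul_comm b x, hb, one_pow, one_smul]
      rw [hz']
      exact Subalgebra.smul_mem _ hmem _
    · intro a p ha hp IH k z hdvd hz hmem
      rw [mul_pow, mul_smul] at hmem
      have h1 : a ^ k • z ∈ Algebra.adjoin ℤ {α} :=
        strip 0 p hp (heip p hp ((dvd_mul_right p a).trans hdvd)) k _ (hz.smul _) hmem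
      exact IH k z ((dvd_mul_left a p).trans hdvd) hz h1
  -- discriminant computation
  have hB0 : (Bc 0).gen = α := by rw [hBgen 0]; simp
  have hBint0 : IsIntegral ℤ (Bc 0).gen := by rw [hB0]; exact hint
  have hfr : Module.finrank ℚ K = n := by
    rw [(Bc 0).finrank, ← (Bc 0).natDegree_minpoly, hB0, hmQ, natDegree_X_pow_sub_C]
  have hnorm : Algebra.norm ℚ α = (m : ℚ) := by
    have h := Algebra.PowerBasis.norm_gen_eq_coeff_zero_minpoly (Bc 0)
    rw [hB0, hmQ] at h
    rw [h, ← (Bc 0).natDegree_minpoly, hB0, hmQ, natDegree_X_pow_sub_C]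
    rw [coeff_sub, coeff_X_pow, if_neg (by omega : ¬ (0 = n)), coeff_C_zero,
      hodd.neg_one_pow]
    ring
  have hdisc : Algebra.discr ℚ (Bc 0).basis =
      (-1 : ℚ) ^ (n * (n - 1) / 2) * ((n : ℚ) ^ n * (m : ℚ) ^ (n - 1)) := by
    rw [Algebra.discr_powerBasis_eq_norm, hfr, hB0, hmQ]
    have hder : derivative ((X : ℚ[X]) ^ n - C (m : ℚ)) = C (n : ℚ) * X ^ (n - 1) := by
      rw [derivative_sub, derivative_C, sub_zero, derivative_X_pow]
    rw [hder]
    have ha : aeval α (C (n : ℚ) * X ^ (n - 1)) = algebraMap ℚ K (n : ℚ) * α ^ (n - 1) := by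
      simp
    rw [ha, map_mul, map_pow, Algebra.norm_algebraMap, hnorm, hfr]
  -- every integral element lies in ℤ[α]
  have key : ∀ z : K, IsIntegral ℤ z → z ∈ Algebra.adjoin ℤ {α} := by
    intro z hz
    have h1 := Algebra.discr_mul_isIntegral_mem_adjoin (K := ℚ) (B := Bc 0) hBint0 hz
    rw [hB0, hdisc] at h1
    have hcast : (-1 : ℚ) ^ (n * (n - 1) / 2) * ((n : ℚ) ^ n * (m : ℚ) ^ (n - 1)) =
        ((((-1 : ℤ) ^ (n * (n - 1) / 2) * ((n : ℤ) ^ n * m ^ (n - 1))) : ℤ) : ℚ) := by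
      push_cast
      ring
    rw [hcast, Int.cast_smul_eq_zsmul] at h1
    have h2 := Subalgebra.smul_mem _ h1 ((-1 : ℤ) ^ (n * (n - 1) / 2) * ((3 : ℤ) ^ n * m))
    rw [← mul_smul] at h2
    have he : ((-1 : ℤ) ^ (n * (n - 1) / 2)) * ((-1 : ℤ) ^ (n * (n - 1) / 2)) = 1 := by
      rw [← pow_add]
      exact Even.neg_one_pow ⟨n * (n - 1) / 2, rfl⟩
    have hmm : m ^ (n - 1) * m = m ^ n := by
      rw [← pow_succ, Nat.sub_add_cancel hn1]
    have hnn : ((n : ℕ) : ℤ) ^ n = 3 ^ (r * n) := by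
      rw [hn]
      push_cast
      rw [← pow_mul]
    have harith : ((-1 : ℤ) ^ (n * (n - 1) / 2) * ((3 : ℤ) ^ n * m)) *
        ((-1 : ℤ) ^ (n * (n - 1) / 2) * ((n : ℤ) ^ n * m ^ (n - 1))) =
        3 ^ (r * n + n) * m ^ n := by
      calc ((-1 : ℤ) ^ (n * (n - 1) / 2) * ((3 : ℤ) ^ n * m)) *
          ((-1 : ℤ) ^ (n * (n - 1) / 2) * ((n : ℤ) ^ n * m ^ (n - 1)))
          = ((-1 : ℤ) ^ (n * (n - 1) / 2) * (-1 : ℤ) ^ (n * (n - 1) / 2)) *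
            (((3 : ℤ) ^ n * 3 ^ (r * n)) * (m ^ (n - 1) * m)) := by rw [hnn]; ring
        _ = 3 ^ (r * n + n) * m ^ n := by
            rw [he, hmm, one_mul, ← pow_add, Nat.add_comm n (r * n)]
    rw [harith, mul_smul] at h2
    have h3 : m ^ n • z ∈ Algebra.adjoin ℤ {α} :=
      strip c 3 Int.prime_three hei3 (r * n + n) _ (hz.smul _) h2
    exact stripM m n z dvd_rfl hz h3
  -- wrap up
  refine ⟨⟨α, (mem_integralClosure_iff ℤ K).2 hint⟩, ?_⟩
  rw [eq_top_iff]
  rintro x -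
  have hx : algebraMap (𝓞 K) K x ∈ Algebra.adjoin ℤ {α} :=
    key _ (RingOfIntegers.isIntegral_coe x)
  have himg : (Algebra.adjoin ℤ ({⟨α, (mem_integralClosure_iff ℤ K).2 hint⟩} : Set (𝓞 K))).map
      (IsScalarTower.toAlgHom ℤ (𝓞 K) K) = Algebra.adjoin ℤ {α} := by
    rw [AlgHom.map_adjoin]
    congr 1
    exact Set.image_singleton
  rw [← himg, Subalgebra.mem_map] at hx
  obtain ⟨y, hy, hyx⟩ := hx
  have hxy : y = x := RingOfIntegers.coe_injective hyx
  exact hxy ▸ hy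
end

section
/- Let p be a rational prime and K a number field with ring of integers Z_K. For a positive integer f, let P_f be the number of distinct nonzero prime ideals of Z_K lying above p with residue degree f over p, and let N_f be the number of monic irreducible polynomials of degree f in 𝔽_p[x]. If P_f > N_f for some positive integer f, then p is a common index divisor of K, i.e., p divides the index (Z_K : ℤ[θ]) for every θ ∈ Z_K with K = ℚ(θ). -/
open Polynomial NumberField

/-- The index `(Z_K : ℤ[θ])` of the order `ℤ[θ]` in the ring of integers,
as the index of the underlying additive subgroup. -/
noncomputable def ringOfIntegersIndex {K : Type*} [Field K] [NumberField K] (θ : 𝓞 K) : ℕ :=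
  (Subalgebra.toSubmodule (Algebra.adjoin ℤ {θ})).toAddSubgroup.index

lemma finite_aux {𝔽 : Type*} [CommRing 𝔽] [Finite 𝔽] (f : ℕ) :
    Finite {g : 𝔽[X] // g.Monic ∧ Irreducible g ∧ g.natDegree = f} := by
  refine Finite.of_injective
    (fun g : {g : 𝔽[X] // g.Monic ∧ Irreducible g ∧ g.natDegree = f} =>
      (fun i : Fin (f + 1) => (g : 𝔽[X]).coeff i)) ?_
  rintro ⟨g, hg⟩ ⟨g', hg'⟩ hgg
  ext n
  rcases le_or_gt n f with hn | hn
  · simpa using congrFun hgg ⟨n, Nat.lt_succ_of_le hn⟩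
  · rw [coeff_eq_zero_of_natDegree_lt (hg.2.2 ▸ hn),
      coeff_eq_zero_of_natDegree_lt (hg'.2.2 ▸ hn)]

lemma exists_injection_primes_to_polys {S : Type*} [CommRing S] {𝔽 : Type*} [Field 𝔽] [Finite 𝔽]
    (I0 : Ideal S) (M : Ideal 𝔽[X]) (E : (S ⧸ I0) ≃+* (𝔽[X] ⧸ M)) (f : ℕ) :
    ∃ Φ : {P : Ideal S // P.IsPrime ∧ I0 ≤ P ∧ Nat.card (S ⧸ P) = Nat.card 𝔽 ^ f} →
        {g : 𝔽[X] // g.Monic ∧ Irreducible g ∧ g.natDegree = f},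
      Function.Injective Φ := by
  classical
  have hcard𝔽 : 2 ≤ Nat.card 𝔽 := Finite.one_lt_card
  set T := {P : Ideal S // P.IsPrime ∧ I0 ≤ P ∧ Nat.card (S ⧸ P) = Nat.card 𝔽 ^ f} with hT
  let chi : ∀ P : T, 𝔽[X] →+* S ⧸ (P : Ideal S) := fun P =>
    ((Ideal.Quotient.factor (T := (P : Ideal S)) P.2.2.1).comp E.symm.toRingHom).comp (Ideal.Quotient.mk M)
  have chi_surj : ∀ P : T, Function.Surjective (chi P) := by
    intro P y
    obtain ⟨x, rfl⟩ := Ideal.Quotient.mk_surjective y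
    obtain ⟨g, hg⟩ := Ideal.Quotient.mk_surjective (E (Ideal.Quotient.mk I0 x))
    refine ⟨g, ?_⟩
    simp only [chi, RingHom.comp_apply, RingEquiv.toRingHom_eq_coe, RingEquiv.coe_toRingHom, hg,
      RingEquiv.symm_apply_apply, Ideal.Quotient.factor_mk]
  have chi_eval : ∀ (P : T) (x : S) (g : 𝔽[X]),
      Ideal.Quotient.mk M g = E (Ideal.Quotient.mk I0 x) →
      chi P g = Ideal.Quotient.mk (P : Ideal S) x := by
    intro P x g hg
    simp only [chi, RingHom.comp_apply, RingEquiv.toRingHom_eq_coe, RingEquiv.coe_toRingHom, hg,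
      RingEquiv.symm_apply_apply, Ideal.Quotient.factor_mk]
  -- basic facts about the kernel
  have key : ∀ P : T, Nat.card (𝔽[X] ⧸ RingHom.ker (chi P)) = Nat.card 𝔽 ^ f := by
    intro P
    rw [Nat.card_congr (RingHom.quotientKerEquivOfSurjective (chi_surj P)).toEquiv]
    exact P.2.2.2
  have hfin : ∀ P : T, Finite (𝔽[X] ⧸ RingHom.ker (chi P)) := by
    intro P
    have : 0 < Nat.card (𝔽[X] ⧸ RingHom.ker (chi P)) := by
      rw [key P]; positivity
    exact (Nat.card_pos_iff.mp this).2
  have hprime : ∀ P : T, (RingHom.ker (chi P)).IsPrime := by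
    intro P
    haveI := P.2.1
    exact RingHom.ker_isPrime (chi P)
  have hne_bot : ∀ P : T, RingHom.ker (chi P) ≠ ⊥ := by
    intro P hbot
    haveI := hfin P
    have hinj : Function.Injective (Ideal.Quotient.mk (RingHom.ker (chi P))) := by
      rw [RingHom.injective_iff_ker_eq_bot, Ideal.mk_ker, hbot]
    exact absurd (Finite.of_injective _ hinj) (@not_finite 𝔽[X] _)
  -- generator
  have hgen : ∀ P : T, Ideal.span {Submodule.IsPrincipal.generator (RingHom.ker (chi P))}
      = RingHom.ker (chi P) := fun P => Ideal.span_singleton_generator _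
  have hg_ne : ∀ P : T, Submodule.IsPrincipal.generator (RingHom.ker (chi P)) ≠ 0 := by
    intro P h0
    apply hne_bot P
    rw [← hgen P, h0, Ideal.span_singleton_eq_bot]
  have hg_prime : ∀ P : T, Prime (Submodule.IsPrincipal.generator (RingHom.ker (chi P))) := by
    intro P
    rw [← Ideal.span_singleton_prime (hg_ne P), hgen P]
    exact hprime P
  have hdeg : ∀ P : T, (Submodule.IsPrincipal.generator (RingHom.ker (chi P))).natDegree = f := by
    intro P
    set g₀ := Submodule.IsPrincipal.generator (RingHom.ker (chi P)) with hg₀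
    have hadj : Nat.card (AdjoinRoot g₀) = Nat.card 𝔽 ^ g₀.natDegree := by
      haveI : Finite (AdjoinRoot g₀) := by
        have := hfin P
        rw [show AdjoinRoot g₀ = (𝔽[X] ⧸ Ideal.span {g₀}) from rfl, hgen P]
        exact this
      haveI : Fintype (AdjoinRoot g₀) := Fintype.ofFinite _
      haveI : Fintype 𝔽 := Fintype.ofFinite _
      rw [Nat.card_eq_fintype_card, Nat.card_eq_fintype_card,
        Module.card_eq_pow_finrank (K := 𝔽) (V := AdjoinRoot g₀),
        PowerBasis.finrank (AdjoinRoot.powerBasis (hg_ne P)), AdjoinRoot.powerBasis_dim]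
    have : Nat.card 𝔽 ^ g₀.natDegree = Nat.card 𝔽 ^ f := by
      rw [← hadj, show AdjoinRoot g₀ = (𝔽[X] ⧸ Ideal.span {g₀}) from rfl, hgen P, key P]
    exact Nat.pow_right_injective hcard𝔽 this
  refine ⟨fun P => ⟨normalize (Submodule.IsPrincipal.generator (RingHom.ker (chi P))),
    Polynomial.monic_normalize (hg_ne P),
    (Associated.symm (normalize_associated _)).irreducible (hg_prime P).irreducible,
    by rw [Polynomial.natDegree_eq_of_degree_eq (Polynomial.degree_normalize), hdeg P]⟩, ?_⟩
  intro P₁ P₂ hP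
  have hker : RingHom.ker (chi P₁) = RingHom.ker (chi P₂) := by
    rw [← hgen P₁, ← hgen P₂]
    have := congrArg Subtype.val hP
    simp only at this
    rw [← Ideal.span_singleton_eq_span_singleton.mpr (normalize_associated _),
      this, Ideal.span_singleton_eq_span_singleton.mpr (normalize_associated _)]
  ext x
  show x ∈ (P₁ : Ideal S) ↔ x ∈ (P₂ : Ideal S)
  obtain ⟨g, hg⟩ := Ideal.Quotient.mk_surjective (E (Ideal.Quotient.mk I0 x))
  have e₁ := chi_eval P₁ x g hg
  have e₂ := chi_eval P₂ x g hg
  constructor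
  · intro hx
    have : g ∈ RingHom.ker (chi P₁) := by
      rw [RingHom.mem_ker, e₁, Ideal.Quotient.eq_zero_iff_mem]; exact hx
    rw [hker, RingHom.mem_ker, e₂, Ideal.Quotient.eq_zero_iff_mem] at this
    exact this
  · intro hx
    have : g ∈ RingHom.ker (chi P₂) := by
      rw [RingHom.mem_ker, e₂, Ideal.Quotient.eq_zero_iff_mem]; exact hx
    rw [← hker, RingHom.mem_ker, e₁, Ideal.Quotient.eq_zero_iff_mem] at this
    exact this

set_option synthInstance.maxHeartbeats 1000000 in
set_option maxHeartbeats 2000000 in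
/-- If the number of distinct nonzero primes of `Z_K` above `p` with residue degree `f`
(equivalently, residue field of cardinality `p^f`) exceeds the number of monic
irreducible polynomials of degree `f` over `𝔽_p`, then `p` is a common index divisor
of `K`. -/
theorem prime_is_common_index_divisor_of_card_primes_gt
    (p : ℕ) (hp : p.Prime) (K : Type*) [Field K] [NumberField K]
    (f : ℕ) (hf : 0 < f)
    (h : Nat.card {g : Polynomial (ZMod p) // g.Monic ∧ Irreducible g ∧ g.natDegree = f}
        < Nat.card {P : Ideal (𝓞 K) //
            P.IsPrime ∧ P ≠ ⊥ ∧ (p : 𝓞 K) ∈ P ∧ Nat.card (𝓞 K ⧸ P) = p ^ f}) :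
    ∀ θ : 𝓞 K, IntermediateField.adjoin ℚ {(θ : K)} = ⊤ →
      p ∣ ringOfIntegersIndex θ := by
  haveI : Fact p.Prime := ⟨hp⟩
  intro θ _ -- the hypothesis that θ generates K is not needed
  by_contra hnd
  set N : ℕ := ringOfIntegersIndex θ with hN
  set I : Ideal ℤ := Ideal.span {((p : ℕ) : ℤ)} with hI
  -- N is in the conductor
  have hNmem : ((N : ℕ) : ℤ) ∈ (conductor ℤ θ).comap (algebraMap ℤ (𝓞 K)) := by
    rw [Ideal.mem_comap, mem_conductor_iff]
    intro b
    have hmem := AddSubgroup.nsmul_index_mem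
      ((Subalgebra.toSubmodule (Algebra.adjoin ℤ {θ})).toAddSubgroup) b
    have : algebraMap ℤ (𝓞 K) ((N : ℕ) : ℤ) * b = N • b := by
      rw [map_natCast, nsmul_eq_mul]
    rw [this]
    exact hmem
  -- the conductor is coprime to p
  have hx : (conductor ℤ θ).comap (algebraMap ℤ (𝓞 K)) ⊔ I = ⊤ := by
    rw [eq_top_iff]
    have hcop : IsCoprime ((N : ℕ) : ℤ) ((p : ℕ) : ℤ) := by
      rw [Int.isCoprime_iff_gcd_eq_one, Int.gcd_natCast_natCast]
      exact Nat.Coprime.symm (hp.coprime_iff_not_dvd.mpr hnd)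
    calc (⊤ : Ideal ℤ) = Ideal.span {((N : ℕ) : ℤ)} ⊔ I :=
          ((Ideal.sup_eq_top_iff_isCoprime _ _).mpr hcop).symm
      _ ≤ (conductor ℤ θ).comap (algebraMap ℤ (𝓞 K)) ⊔ I :=
          sup_le_sup_right ((Ideal.span_singleton_le_iff_mem _).mpr hNmem) _
  have hx' : IsIntegral ℤ θ := IsIntegral.of_finite ℤ θ
  have hinj : Function.Injective (algebraMap (Algebra.adjoin ℤ {θ}) (𝓞 K)) :=
    fun a b hab => Subtype.ext hab
  -- build the ring equivalence
  let E₁ := quotAdjoinEquivQuotMap (x := θ) (I := I) hx hinj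
  let E₂ := ((Algebra.adjoin.powerBasis' hx').quotientEquivQuotientMinpolyMap I).toRingEquiv
  let ψ := Polynomial.mapEquiv (Int.quotientSpanNatEquivZMod p)
  let E₃ := Ideal.quotientEquiv
    (Ideal.span {Polynomial.map (Ideal.Quotient.mk I)
      (minpoly ℤ (Algebra.adjoin.powerBasis' hx').gen)}) _ ψ rfl
  let E := (E₁.symm.trans E₂).trans E₃
  obtain ⟨Φ, hΦ⟩ := exists_injection_primes_to_polys
    (I.map (algebraMap ℤ (𝓞 K))) _ E f
  have hmapI : I.map (algebraMap ℤ (𝓞 K)) = Ideal.span {(p : 𝓞 K)} := by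
    rw [hI, Ideal.map_span, Set.image_singleton, map_natCast]
  let incl : {P : Ideal (𝓞 K) //
        P.IsPrime ∧ P ≠ ⊥ ∧ (p : 𝓞 K) ∈ P ∧ Nat.card (𝓞 K ⧸ P) = p ^ f} →
      {P : Ideal (𝓞 K) // P.IsPrime ∧ I.map (algebraMap ℤ (𝓞 K)) ≤ P ∧
        Nat.card (𝓞 K ⧸ P) = Nat.card (ZMod p) ^ f} :=
    fun P => ⟨P.1, P.2.1,
      by rw [hmapI]; exact (Ideal.span_singleton_le_iff_mem _).mpr P.2.2.2.1,
      by rw [Nat.card_zmod]; exact P.2.2.2.2⟩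
  have hincl : Function.Injective incl := by
    intro a b hab
    have h1 : (incl a).1 = (incl b).1 := congrArg Subtype.val hab
    exact Subtype.ext h1
  haveI := finite_aux (𝔽 := ZMod p) f
  have := Nat.card_le_card_of_injective _ (hΦ.comp hincl)
  omega
end

section
/- Let p be a rational prime and K a number field with ring of integers Z_K. If the number of distinct nonzero prime ideals of Z_K lying above p with residue degree 1 over p is strictly greater than p, then p is a common index divisor of K, i.e., p divides the index (Z_K : ℤ[θ]) for every θ ∈ Z_K with K = ℚ(θ). -/
open Polynomial NumberField

/-- A prime ideal with residue field of cardinality `p` admits a ring hom to `ZMod p`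
whose kernel is exactly the ideal. -/
lemma exists_hom_to_zmod {R : Type*} [CommRing R] (p : ℕ) (hp : p.Prime) (P : Ideal R)
    (hPp : P.IsPrime) (hmem : (p : R) ∈ P) (hcard : Nat.card (R ⧸ P) = p) :
    ∃ φ : R →+* ZMod p, ∀ x, φ x = 0 ↔ x ∈ P := by
  haveI : Fact p.Prime := ⟨hp⟩
  haveI : Finite (R ⧸ P) := Nat.finite_of_card_ne_zero (by rw [hcard]; exact hp.ne_zero)
  have hp0 : ((p : ℕ) : R ⧸ P) = 0 := by
    rw [← map_natCast (Ideal.Quotient.mk P)]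
    exact Ideal.Quotient.eq_zero_iff_mem.mpr hmem
  have hdvd : ringChar (R ⧸ P) ∣ p := ringChar.dvd hp0
  have hne1 : ringChar (R ⧸ P) ≠ 1 := by
    intro h1
    haveI : CharP (R ⧸ P) 1 := ringChar.eq_iff.mp h1
    have h10 := CharP.cast_eq_zero (R ⧸ P) 1
    rw [Nat.cast_one] at h10
    exact one_ne_zero h10
  have hchar : ringChar (R ⧸ P) = p := (hp.eq_one_or_self_of_dvd _ hdvd).resolve_left hne1
  haveI : CharP (R ⧸ P) p := ringChar.eq_iff.mp hchar
  let f : ZMod p →+* R ⧸ P := ZMod.castHom dvd_rfl (R ⧸ P)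
  have hbij : Function.Bijective f :=
    (Nat.bijective_iff_injective_and_card f).mpr ⟨f.injective, by rw [Nat.card_zmod, hcard]⟩
  let e : ZMod p ≃+* R ⧸ P := RingEquiv.ofBijective f hbij
  refine ⟨(e.symm : R ⧸ P →+* ZMod p).comp (Ideal.Quotient.mk P), fun x => ?_⟩
  simp only [RingHom.comp_apply, RingEquiv.coe_toRingHom]
  rw [show (0 : ZMod p) = e.symm 0 by simp, e.symm.injective.eq_iff,
    Ideal.Quotient.eq_zero_iff_mem]

/-- If the number of distinct nonzero primes of `Z_K` above `p` with residue degree `1`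
(equivalently, residue field of cardinality `p`) is strictly greater than `p`, then `p`
is a common index divisor of `K`. -/
theorem prime_is_common_index_divisor_of_card_primes_gt_p
    (p : ℕ) (hp : p.Prime) (K : Type*) [Field K] [NumberField K]
    (h : p < Nat.card {P : Ideal (𝓞 K) //
            P.IsPrime ∧ P ≠ ⊥ ∧ (p : 𝓞 K) ∈ P ∧ Nat.card (𝓞 K ⧸ P) = p}) :
    ∀ θ : 𝓞 K, IntermediateField.adjoin ℚ {(θ : K)} = ⊤ →
      p ∣ ringOfIntegersIndex θ := by
  intro θ _hθ
  by_contra hndvd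
  haveI : Fact p.Prime := ⟨hp⟩
  set N := ringOfIntegersIndex θ with hNdef
  -- the key fact: N • x ∈ ℤ[θ] for every x
  have key : ∀ x : 𝓞 K, (N : 𝓞 K) * x ∈ Algebra.adjoin ℤ {θ} := by
    intro x
    have := AddSubgroup.nsmul_index_mem
      (Subalgebra.toSubmodule (Algebra.adjoin ℤ {θ})).toAddSubgroup x
    simpa [nsmul_eq_mul, hNdef, ringOfIntegersIndex] using this
  have hNzmod : (N : ZMod p) ≠ 0 := by
    intro h0
    exact hndvd ((ZMod.natCast_eq_zero_iff N p).mp h0)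
  -- choose homs to ZMod p
  have hsub : ∀ P : {P : Ideal (𝓞 K) //
      P.IsPrime ∧ P ≠ ⊥ ∧ (p : 𝓞 K) ∈ P ∧ Nat.card (𝓞 K ⧸ P) = p},
      ∃ φ : 𝓞 K →+* ZMod p, ∀ x, φ x = 0 ↔ x ∈ P.1 := by
    rintro ⟨P, hP1, _, hP3, hP4⟩
    exact exists_hom_to_zmod p hp P hP1 (by exact_mod_cast hP3) hP4
  choose φ hφ using hsub
  -- the map P ↦ φ P θ is injective
  have hinj : Function.Injective (fun P => φ P θ) := by
    intro P Q hPQ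
    simp only at hPQ
    -- agreement on ℤ[θ]
    have hagree : ∀ x ∈ Algebra.adjoin ℤ {θ}, φ P x = φ Q x := by
      intro x hx
      induction hx using Algebra.adjoin_induction with
      | mem y hy =>
        rw [Set.mem_singleton_iff] at hy
        subst hy; exact hPQ
      | algebraMap r => simp [algebraMap_int_eq, map_intCast]
      | add x y _ _ ihx ihy => rw [map_add, map_add, ihx, ihy]
      | mul x y _ _ ihx ihy => rw [map_mul, map_mul, ihx, ihy]
    -- agreement everywhere, using that (N : ZMod p) is invertible
    have hall : ∀ x : 𝓞 K, φ P x = φ Q x := by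
      intro x
      have h1 : φ P ((N : 𝓞 K) * x) = φ Q ((N : 𝓞 K) * x) := hagree _ (key x)
      rw [map_mul, map_mul, map_natCast, map_natCast] at h1
      exact mul_left_cancel₀ hNzmod h1
    -- hence the ideals coincide
    ext x
    rw [← hφ P x, ← hφ Q x, hall x]
  have hle : Nat.card {P : Ideal (𝓞 K) //
      P.IsPrime ∧ P ≠ ⊥ ∧ (p : 𝓞 K) ∈ P ∧ Nat.card (𝓞 K ⧸ P) = p}
      ≤ Nat.card (ZMod p) := Nat.card_le_card_of_injective _ hinj
  rw [Nat.card_zmod] at hle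
  omega
end

section
/- Let p be a rational prime, r a positive integer, and m ≠ 1 a squarefree rational integer not divisible by p, such that F(x) = x^(p^r) − m is irreducible over ℚ. Let α be a complex root of F and K = ℚ(α) with ring of integers Z_K. If ν_p(m^(p−1) − 1) ≥ 2, then p divides the index (Z_K : ℤ[α]). -/
open Polynomial NumberField

lemma key_poly (p : ℕ) (hp : p.Prime) (r : ℕ) (m : ℤ) :
    ∃ B : ℤ[X], (X - C m) ^ p ^ r =
      (X ^ p ^ r - C m) + C (m - m ^ p ^ r) + C (p : ℤ) * ((X - C m) * B) := by
  have : Fact p.Prime := ⟨hp⟩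
  set n := p ^ r with hn
  have hn0 : n ≠ 0 := pow_ne_zero _ hp.pos.ne'
  set G : ℤ[X] := (X - C m) ^ n - (X ^ n - C m) - C (m - m ^ n) with hG
  have hmap : G.map (Int.castRingHom (ZMod p)) = 0 := by
    have h1 : ((X : (ZMod p)[X]) - C (m : ZMod p)) ^ p ^ r
        = X ^ p ^ r - (C (m : ZMod p)) ^ p ^ r := sub_pow_char_pow _ _ r
    have hc : ((Int.castRingHom (ZMod p)) m) = ((m : ZMod p)) := by simp
    simp only [hG, Polynomial.map_sub, Polynomial.map_pow, Polynomial.map_intCast,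
      map_X, map_C, hn, hc]
    rw [map_sub, map_pow, hc, map_sub (C : ZMod p →+* _), map_pow, h1]
    ring
  have hdvd : C (p : ℤ) ∣ G := by
    rw [Polynomial.C_dvd_iff_dvd_coeff]
    intro i
    have := congrArg (fun q => Polynomial.coeff q i) hmap
    simp only [Polynomial.coeff_map, Polynomial.coeff_zero] at this
    exact_mod_cast (ZMod.intCast_zmod_eq_zero_iff_dvd _ _).mp this
  obtain ⟨H, hH⟩ := hdvd
  have hroot : H.IsRoot m := by
    have hGm : G.eval m = 0 := by
      simp [hG, zero_pow hn0]
    rw [hH] at hGm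
    simp only [eval_mul, eval_C] at hGm
    have hp0 : (p : ℤ) ≠ 0 := by exact_mod_cast hp.pos.ne'
    exact (mul_eq_zero.mp hGm).resolve_left hp0
  obtain ⟨B, hB⟩ := (dvd_iff_isRoot.mpr hroot)
  refine ⟨B, ?_⟩
  have : G = C (p:ℤ) * ((X - C m) * B) := by rw [hH, hB]
  rw [hG] at this
  linear_combination this


lemma psq_dvd (p r : ℕ) (hp : p.Prime) (m : ℤ)
    (h : (p:ℤ)^2 ∣ m ^ (p-1) - 1) : (p:ℤ)^2 ∣ m ^ p ^ r - m := by
  obtain ⟨s, hs⟩ : (p - 1) ∣ (p ^ r - 1) := by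
    simpa using Nat.sub_dvd_pow_sub_pow p 1 r
  have h1 : m ^ p ^ r - m = m * (m ^ (p ^ r - 1) - 1) := by
    rw [mul_sub, mul_one, ← pow_succ']
    rw [Nat.sub_add_cancel (Nat.one_le_pow _ _ hp.pos)]
  rw [h1, hs, pow_mul]
  have h2 : m ^ (p-1) - 1 ∣ (m ^ (p-1)) ^ s - 1 := by
    simpa using sub_dvd_pow_sub_pow (m ^ (p-1)) 1 s
  exact Dvd.dvd.mul_left (h.trans h2) m

/-- Let `K = ℚ(α)` where `α` is a root of the irreducible polynomial `x^(p^r) - m`,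
`m ≠ 1` squarefree and not divisible by the prime `p`. If `ν_p(m^(p-1) - 1) ≥ 2`,
then `p` divides the index `(Z_K : ℤ[α])`. -/
theorem prime_dvd_index_of_two_le_padicValInt
    (p r : ℕ) (hp : p.Prime) (hr : 0 < r) (m : ℤ) (hm : Squarefree m) (hm1 : m ≠ 1)
    (hpm : ¬ (p : ℤ) ∣ m)
    (hF : Irreducible ((X : ℚ[X]) ^ p ^ r - C (m : ℚ)))
    (K : Type*) [Field K] [NumberField K] (α : 𝓞 K)
    (hgen : IntermediateField.adjoin ℚ {(α : K)} = ⊤)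
    (hroot : (α : K) ^ p ^ r = (m : K))
    (hval : 2 ≤ padicValInt p (m ^ (p - 1) - 1)) :
    p ∣ ringOfIntegersIndex α := by
  have hfact : Fact p.Prime := ⟨hp⟩
  set n := p ^ r with hn
  have hn1 : 1 < n := Nat.one_lt_pow hr.ne' hp.one_lt
  have hn0 : n ≠ 0 := by omega
  -- the root equation inside 𝓞 K
  have hrootO : α ^ n = (m : 𝓞 K) := by
    have : ((α ^ n : 𝓞 K) : K) = (((m : 𝓞 K)) : K) := by push_cast; exact hroot
    exact_mod_cast this
  -- p^2 divides m - m^n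
  have hdvd2 : (p:ℤ)^2 ∣ m ^ (p-1) - 1 := (padicValInt_dvd_iff 2 _).mpr (Or.inr hval)
  obtain ⟨t, ht⟩ : (p:ℤ)^2 ∣ m - m ^ n := by
    have := psq_dvd p r hp m hdvd2
    have h2 : -(m ^ p ^ r - m) = m - m ^ n := by rw [neg_sub]
    exact h2 ▸ (dvd_neg.mpr this)

  -- the key identity in 𝓞 K
  set γ : 𝓞 K := α - (m : 𝓞 K) with hγ
  obtain ⟨B, hB⟩ := key_poly p hp r m
  have hkey : ∃ c : 𝓞 K, (∃ t d : 𝓞 K, c = (p : 𝓞 K) * t + γ * d) ∧ γ ^ n = (p : 𝓞 K) * c := by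
    refine ⟨(p : 𝓞 K) * (t : 𝓞 K) + γ * (aeval α B), ⟨_, _, rfl⟩, ?_⟩
    have := congrArg (aeval α) hB
    simp only [map_add, map_mul, map_sub, map_pow, aeval_X, aeval_C] at this
    simp only [algebraMap_int_eq, eq_intCast] at this
    rw [← hn, hrootO] at this
    have htO : ((m : 𝓞 K) - (m : 𝓞 K) ^ n) = ((p:ℕ) : 𝓞 K)^2 * ((t : ℤ) : 𝓞 K) := by
      exact_mod_cast congrArg (fun z : ℤ => ((z : 𝓞 K))) ht
    rw [hγ]
    push_cast at this ⊢
    linear_combination this + htO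
  obtain ⟨c, ⟨t', d', hcd⟩, hkey⟩ := hkey
  -- the element x = γ^(n-1)/p of K is integral
  have hpK : ((p:ℕ) : K) ≠ 0 := by exact_mod_cast hp.pos.ne'
  set x : K := ((γ ^ (n-1) : 𝓞 K) : K) / ((p : ℕ) : K) with hx
  have hxp : ((p:ℕ):K) * x = ((γ ^ (n-1) : 𝓞 K) : K) := by
    rw [hx, mul_div_assoc']; exact mul_div_cancel_left₀ _ hpK
  have hxγ : x * (γ : K) = ((c : 𝓞 K) : K) := by
    have h1 : ((p:ℕ):K) * (x * (γ:K)) = ((p:ℕ):K) * ((c : 𝓞 K):K) := by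
      rw [← mul_assoc, hxp]
      have h2 : ((γ^(n-1) : 𝓞 K):K) * ((γ : 𝓞 K):K) = ((γ^n : 𝓞 K) : K) := by
        push_cast
        rw [← pow_succ]
        congr 1
        omega
      rw [h2, hkey]
      push_cast
      ring
    exact mul_left_cancel₀ hpK h1
  -- the ideal (p, γ)
  set I : Ideal (𝓞 K) := Ideal.span {((p:ℕ) : 𝓞 K), γ} with hI
  have hpI : ((p:ℕ) : 𝓞 K) ∈ I := Ideal.subset_span (by simp)
  have hγI : γ ∈ I := Ideal.subset_span (by simp)
  have hcI : c ∈ I := by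
    rw [hcd]; exact add_mem (I.mul_mem_right _ hpI) (I.mul_mem_right _ hγI)
  have hγn1I : γ ^ (n-1) ∈ I := by
    have h3 : γ ^ (n-1) = γ * γ ^ (n-2) := by rw [← pow_succ']; congr 1; omega
    rw [h3]; exact I.mul_mem_right _ hγI
  set N : Submodule ℤ K :=
    Submodule.map ((Algebra.linearMap (𝓞 K) K).restrictScalars ℤ) (I.restrictScalars ℤ) with hN
  have hNfg : N.FG := by
    have : IsNoetherian ℤ (𝓞 K) := isNoetherian_of_isNoetherianRing_of_finite ℤ (𝓞 K)
    exact (IsNoetherian.noetherian _).map _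
  have hNbot : N ≠ ⊥ := by
    intro h
    have hmem : (((p:ℕ) : 𝓞 K) : K) ∈ N := ⟨_, hpI, rfl⟩
    rw [h, Submodule.mem_bot] at hmem
    exact hpK (by exact_mod_cast hmem)
  have hint : IsIntegral ℤ x := by
    refine isIntegral_of_smul_mem_submodule N hNbot hNfg x ?_
    rintro _ ⟨z, hz, rfl⟩
    obtain ⟨a, b, hab⟩ := Ideal.mem_span_pair.mp hz
    refine ⟨a * γ^(n-1) + b * c,
      add_mem (I.mul_mem_left a hγn1I) (I.mul_mem_left b hcI), ?_⟩
    show ((a * γ^(n-1) + b * c : 𝓞 K) : K) = x • ((z : 𝓞 K) : K)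
    rw [smul_eq_mul, ← hab]
    push_cast at hxp hxγ ⊢
    linear_combination (-(a : K)) * hxp - (b : K) * hxγ
  -- the integral element θ with p * θ = γ^(n-1)
  set θ : 𝓞 K := ⟨x, hint⟩ with hθdef
  have hθcoe : (θ : K) = x := rfl
  have hpθ : ((p:ℕ) : 𝓞 K) * θ = γ ^ (n-1) := by
    have h6 : ((((p:ℕ):𝓞 K) * θ : 𝓞 K) : K) = ((γ ^ (n-1) : 𝓞 K) : K) := by
      push_cast [hθcoe]
      push_cast at hxp
      exact hxp
    exact_mod_cast h6
  -- γ ∈ ℤ[α]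
  have hγmem : γ ∈ Algebra.adjoin ℤ ({α} : Set (𝓞 K)) := by
    refine sub_mem (Algebra.subset_adjoin rfl) ?_
    have h7 : (m : 𝓞 K) = algebraMap ℤ (𝓞 K) m := rfl
    rw [h7]; exact Subalgebra.algebraMap_mem _ _
  -- θ ∉ ℤ[α]
  have hθnot : θ ∉ Algebra.adjoin ℤ ({α} : Set (𝓞 K)) := by
    intro hmem
    rw [Algebra.adjoin_singleton_eq_range_aeval] at hmem
    obtain ⟨q, hq⟩ := hmem
    set f : ℤ[X] := X ^ n - C m with hf
    have hfm : f.Monic := monic_X_pow_sub_C m hn0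
    have haf : aeval α f = 0 := by
      simp only [hf, map_sub, map_pow, aeval_X, aeval_C]
      simp only [algebraMap_int_eq, eq_intCast]
      rw [hrootO]; ring
    set ρ : ℤ[X] := q %ₘ f with hρ
    have haρ : aeval α ρ = θ := by
      have h8 := congrArg (aeval α) (modByMonic_add_div q f)
      simp only [map_add, map_mul, haf, zero_mul, add_zero] at h8
      rw [← hρ] at h8
      rw [h8]; exact hq
    set d : ℤ[X] := (X - C m) ^ (n-1) - C (p:ℤ) * ρ with hd
    have haevald : aeval α d = 0 := by
      simp only [hd, map_sub, map_mul, map_pow, aeval_X, aeval_C, haρ]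
      simp only [algebraMap_int_eq, eq_intCast]
      rw [← hγ]
      have h9 : ((p:ℤ) : 𝓞 K) = ((p:ℕ) : 𝓞 K) := by push_cast; ring
      rw [h9, hpθ]
      ring
    by_cases hd0 : d = 0
    · have hcoeff := congrArg (fun q : ℤ[X] => q.coeff (n-1)) hd0
      simp only [hd, coeff_sub, coeff_zero] at hcoeff
      have h5 : ((X - C m : ℤ[X]) ^ (n-1)).coeff (n-1) = 1 := by
        have hmon : ((X - C m : ℤ[X]) ^ (n-1)).Monic := (monic_X_sub_C m).pow _
        have hdeg : ((X - C m : ℤ[X]) ^ (n-1)).natDegree = n-1 := by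
          rw [natDegree_pow, natDegree_X_sub_C, mul_one]
        have h5' := hmon.coeff_natDegree
        rwa [hdeg] at h5'
      rw [h5, coeff_C_mul] at hcoeff
      have h10 : (p:ℤ) ∣ 1 := ⟨ρ.coeff (n-1), by linarith⟩
      have h11 := Int.le_of_dvd one_pos h10
      have := hp.two_le
      omega
    · have hdQ : (d.map (Int.castRingHom ℚ)) ≠ 0 := by
        simpa using (Polynomial.map_ne_zero_iff (Int.cast_injective)).mpr hd0
      have haQ : aeval ((α : K)) (d.map (Int.castRingHom ℚ)) = 0 := by
        rw [show (Int.castRingHom ℚ) = algebraMap ℤ ℚ from rfl]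
        rw [aeval_map_algebraMap, aeval_algebraMap_apply, haevald, map_zero]
      have hdegd : (d.map (Int.castRingHom ℚ)).degree < (n : WithBot ℕ) := by
        refine lt_of_le_of_lt (degree_map_le) ?_
        refine lt_of_le_of_lt (degree_sub_le _ _) ?_
        rw [max_lt_iff]
        constructor
        · have hdeg2 : ((X - C m : ℤ[X]) ^ (n-1)).degree = ((n-1 : ℕ) : WithBot ℕ) := by
            have hmon : ((X - C m : ℤ[X]) ^ (n-1)).Monic := (monic_X_sub_C m).pow _
            rw [degree_eq_natDegree hmon.ne_zero, natDegree_pow, natDegree_X_sub_C, mul_one]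
          rw [hdeg2]
          exact_mod_cast (by omega : n - 1 < n)
        · refine lt_of_le_of_lt (degree_mul_le _ _) ?_
          have hρlt := degree_modByMonic_lt q hfm
          rw [← hρ] at hρlt
          rw [hf, degree_X_pow_sub_C (by omega : 0 < n)] at hρlt
          calc degree (C (p:ℤ)) + degree ρ ≤ 0 + degree ρ :=
                add_le_add degree_C_le le_rfl
            _ = degree ρ := zero_add _
            _ < (n : WithBot ℕ) := hρlt
      have hminQ : minpoly ℚ ((α:K)) = X ^ n - C (m:ℚ) := by
        refine (minpoly.eq_of_irreducible_of_monic hF ?_ ?_).symm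
        · simp [hroot]
        · exact monic_X_pow_sub_C _ hn0
      have h12 := minpoly.degree_le_of_ne_zero ℚ ((α:K)) hdQ haQ
      rw [hminQ, degree_X_pow_sub_C (by omega : 0 < n)] at h12
      exact absurd (lt_of_le_of_lt h12 hdegd) (lt_irrefl _)
  -- conclude
  classical
  set H : AddSubgroup (𝓞 K) :=
    (Subalgebra.toSubmodule (Algebra.adjoin ℤ ({α} : Set (𝓞 K)))).toAddSubgroup with hH
  have hγH : γ ^ (n-1) ∈ H := pow_mem hγmem (n-1)
  set qq : 𝓞 K ⧸ H := QuotientAddGroup.mk θ with hqq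
  have hq0 : qq ≠ 0 := by
    simpa [hqq, hH, QuotientAddGroup.eq_zero_iff] using hθnot
  have hpq : p • qq = 0 := by
    have h13 : p • θ = ((p:ℕ):𝓞 K) * θ := nsmul_eq_mul _ _
    rw [hqq, ← QuotientAddGroup.mk_nsmul, QuotientAddGroup.eq_zero_iff, h13, hpθ]
    exact hγH
  have h1 : addOrderOf qq ∣ p := addOrderOf_dvd_of_nsmul_eq_zero hpq
  have h2 : addOrderOf qq = p := by
    rcases (Nat.Prime.eq_one_or_self_of_dvd hp _ h1) with h | h
    · exact absurd (AddMonoid.addOrderOf_eq_one_iff.mp h) hq0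
    · exact h
  have h3 : addOrderOf qq ∣ Nat.card (𝓞 K ⧸ H) := addOrderOf_dvd_natCard qq
  rw [h2] at h3
  exact h3
end

section
/- Let r be a positive integer and m ≠ 1 a squarefree rational integer whose residue modulo 49 is not in {1, 18, 19, 30, 31, 48}, such that F(x) = x^(7^r) − m is irreducible over ℚ. Let α be a complex root of F and K = ℚ(α). Then K is monogenic. -/
open Polynomial NumberField

set_option maxRecDepth 8000

section Aux

lemma zmod49_pow_aux : ∀ x : ZMod 49, x ^ 49 = x ^ 7 := by decide

lemma zmod49_pow (r : ℕ) (hr : 0 < r) (x : ZMod 49) : x ^ 7 ^ r = x ^ 7 := by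
  induction r with
  | zero => omega
  | succ k ih =>
    rcases Nat.eq_zero_or_pos k with rfl | hk
    · simp
    · rw [pow_succ, pow_mul, ih hk, ← pow_mul]
      exact zmod49_pow_aux x

lemma zmod7_pow_aux : ∀ x : ZMod 7, x ^ 7 = x := by decide

lemma zmod7_pow (r : ℕ) (x : ZMod 7) : x ^ 7 ^ r = x := by
  induction r with
  | zero => simp
  | succ k ih => rw [pow_succ, pow_mul, ih, zmod7_pow_aux]

lemma zmod49_sol : ∀ x : ZMod 49, x ^ 7 = x →
    x = 0 ∨ x = 1 ∨ x = 18 ∨ x = 19 ∨ x = 30 ∨ x = 31 ∨ x = 48 := by decide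

lemma seven_dvd_pow_sub (r : ℕ) (m : ℤ) : (7:ℤ) ∣ m ^ 7 ^ r - m := by
  have : ((m ^ 7 ^ r - m : ℤ) : ZMod 7) = 0 := by
    push_cast
    rw [zmod7_pow r (m : ZMod 7)]
    ring
  exact_mod_cast (ZMod.intCast_zmod_eq_zero_iff_dvd _ 7).1 this

lemma not_fortynine_dvd (r : ℕ) (hr : 0 < r) (m : ℤ) (hm : Squarefree m)
    (hmod : m % 49 ∉ ({1, 18, 19, 30, 31, 48} : Finset ℤ)) :
    ¬ (49:ℤ) ∣ m ^ 7 ^ r - m := by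
  intro h
  have h0 : ((m : ZMod 49)) ^ 7 = (m : ZMod 49) := by
    have h1 : ((m ^ 7 ^ r - m : ℤ) : ZMod 49) = 0 := by
      exact_mod_cast (ZMod.intCast_zmod_eq_zero_iff_dvd _ 49).2 h
    push_cast at h1
    rw [zmod49_pow r hr (m : ZMod 49)] at h1
    linear_combination h1
  have hconv : ∀ c : ℤ, (m : ZMod 49) = ((c : ℤ) : ZMod 49) → m % 49 = c % 49 := by
    intro c hc
    exact (ZMod.intCast_eq_intCast_iff _ _ _).1 hc
  rcases zmod49_sol _ h0 with h|h|h|h|h|h|h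
  · have : (49:ℤ) ∣ m := by
      exact_mod_cast (ZMod.intCast_zmod_eq_zero_iff_dvd m 49).1 h
    have h7 : (7:ℤ) * 7 ∣ m := by norm_num; exact_mod_cast this
    exact absurd (hm 7 h7) (by decide)
  all_goals {
    apply hmod
    simp only [Finset.mem_insert, Finset.mem_singleton]
    first
      | exact Or.inl (by rw [hconv 1 (by exact_mod_cast h)]; decide)
      | exact Or.inr (Or.inl (by rw [hconv 18 (by exact_mod_cast h)]; decide))
      | exact Or.inr (Or.inr (Or.inl (by rw [hconv 19 (by exact_mod_cast h)]; decide)))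
      | exact Or.inr (Or.inr (Or.inr (Or.inl (by rw [hconv 30 (by exact_mod_cast h)]; decide))))
      | exact Or.inr (Or.inr (Or.inr (Or.inr (Or.inl (by
          rw [hconv 31 (by exact_mod_cast h)]; decide)))))
      | exact Or.inr (Or.inr (Or.inr (Or.inr (Or.inr (by
          rw [hconv 48 (by exact_mod_cast h)]; decide))))) }

lemma eis_X_pow_sub_C {n : ℕ} (hn : n ≠ 0) {m p : ℤ} (hp : Prime p) (hpm : p ∣ m)
    (hsq : ¬ p * p ∣ m) :
    ((X : ℤ[X]) ^ n - C m).IsEisensteinAt (Ideal.span {p}) := by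
  constructor
  · rw [(monic_X_pow_sub_C m hn).leadingCoeff, Ideal.mem_span_singleton]
    exact fun h => hp.not_unit (isUnit_of_dvd_one h)
  · intro i hi
    rw [natDegree_X_pow_sub_C] at hi
    rw [coeff_sub, coeff_X_pow, if_neg hi.ne, coeff_C]
    split <;> simp [Ideal.mem_span_singleton, hpm, dvd_neg]
  · rw [coeff_sub, coeff_X_pow, if_neg (by omega), coeff_C, if_pos rfl,
      Ideal.span_singleton_pow, Ideal.mem_span_singleton]
    rw [zero_sub, dvd_neg, sq]
    exact hsq

lemma eis_comp (r : ℕ) (hr : 0 < r) (m : ℤ) (hm : Squarefree m)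
    (hmod : m % 49 ∉ ({1, 18, 19, 30, 31, 48} : Finset ℤ)) :
    (((X : ℤ[X]) ^ 7 ^ r - C m).comp (X + C m)).IsEisensteinAt (Ideal.span {(7:ℤ)}) := by
  have hn : (7:ℕ) ^ r ≠ 0 := pow_ne_zero _ (by norm_num)
  have hcomp : ((X : ℤ[X]) ^ 7 ^ r - C m).comp (X + C m) = (X + C m) ^ 7 ^ r - C m := by
    simp [sub_comp, pow_comp]
  have hdeg : (((X : ℤ[X]) ^ 7 ^ r - C m).comp (X + C m)).natDegree = 7 ^ r := by
    rw [natDegree_comp, natDegree_X_pow_sub_C, natDegree_X_add_C, mul_one]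
  have hc0 : (((X : ℤ[X]) ^ 7 ^ r - C m).comp (X + C m)).coeff 0 = m ^ 7 ^ r - m := by
    rw [hcomp, coeff_sub, coeff_X_add_C_pow, coeff_C, if_pos rfl, Nat.sub_zero,
      Nat.choose_zero_right, Nat.cast_one, mul_one]
  constructor
  · rw [((monic_X_pow_sub_C m hn).comp_X_add_C m).leadingCoeff, Ideal.mem_span_singleton]
    intro h
    norm_num at h
  · intro i hi
    rw [hdeg] at hi
    rcases Nat.eq_zero_or_pos i with rfl | hi0
    · rw [hc0, Ideal.mem_span_singleton]
      exact seven_dvd_pow_sub r m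
    · rw [hcomp, coeff_sub, coeff_X_add_C_pow, coeff_C, if_neg hi0.ne', sub_zero,
        Ideal.mem_span_singleton]
      refine Dvd.dvd.mul_left ?_ _
      have : (7:ℕ) ∣ (7 ^ r).choose i :=
        Nat.Prime.dvd_choose_pow (by norm_num) hi0.ne' hi.ne
      exact_mod_cast Int.natCast_dvd_natCast.2 this
  · rw [hc0, Ideal.span_singleton_pow, Ideal.mem_span_singleton]
    intro hdvd
    exact not_fortynine_dvd r hr m hm hmod (by norm_num at hdvd ⊢; exact_mod_cast hdvd)

end Aux

/-- If `m ≠ 1` is squarefree, its residue modulo `49` is not in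
`{1, 18, 19, 30, 31, 48}`, and `x^(7^r) - m` is irreducible over `ℚ`, then
`K = ℚ(α)` is monogenic, where `α` is a root. -/
theorem pure_seven_power_field_monogenic
    (r : ℕ) (hr : 0 < r) (m : ℤ) (hm : Squarefree m) (hm1 : m ≠ 1)
    (hmod : m % 49 ∉ ({1, 18, 19, 30, 31, 48} : Finset ℤ))
    (hF : Irreducible ((X : ℚ[X]) ^ 7 ^ r - C (m : ℚ)))
    (K : Type*) [Field K] [NumberField K] (α : K)
    (hgen : IntermediateField.adjoin ℚ {α} = ⊤)
    (hroot : α ^ 7 ^ r = (m : K)) :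
    ∃ θ : 𝓞 K, Algebra.adjoin ℤ {θ} = ⊤ := by
  classical
  set n := 7 ^ r with hn_def
  have hn0 : n ≠ 0 := pow_ne_zero _ (by norm_num)
  have hn1 : 1 ≤ n := Nat.one_le_iff_ne_zero.2 hn0
  have hm0 : m ≠ 0 := by rintro rfl; exact not_squarefree_zero hm
  have hodd : Odd n := (by decide : Odd 7).pow
  -- integrality
  have hα_int : IsIntegral ℤ α := by
    refine ⟨X ^ n - C m, monic_X_pow_sub_C m hn0, ?_⟩
    simp only [eval₂_sub, eval₂_X_pow, eval₂_C, hroot]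
    simp
  have hm_int : IsIntegral ℤ ((m : K)) := by
    simpa using isIntegral_algebraMap (R := ℤ) (A := K) (x := m)
  have hαm_int : IsIntegral ℤ (α - (m : K)) := hα_int.sub hm_int
  -- minimal polynomials
  have hmq : minpoly ℚ α = X ^ n - C (m : ℚ) := by
    refine (minpoly.eq_of_irreducible_of_monic hF ?_ (monic_X_pow_sub_C _ hn0)).symm
    simp [hroot]
  have hmz : minpoly ℤ α = X ^ n - C m := by
    have h1 := minpoly.isIntegrallyClosed_eq_field_fractions' ℚ hα_int
    apply Polynomial.map_injective (algebraMap ℤ ℚ) (algebraMap ℤ ℚ).injective_int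
    rw [← h1, hmq]
    simp
  have hmq' : minpoly ℚ (α - (m : K)) = (X ^ n - C (m : ℚ)).comp (X + C (m : ℚ)) := by
    have hcast : (m : K) = algebraMap ℚ K ((m : ℤ) : ℚ) := by simp
    rw [hcast, minpoly.sub_algebraMap, hmq]
  have hmz' : minpoly ℤ (α - (m : K)) = ((X : ℤ[X]) ^ n - C m).comp (X + C m) := by
    have h1 := minpoly.isIntegrallyClosed_eq_field_fractions' ℚ hαm_int
    apply Polynomial.map_injective (algebraMap ℤ ℚ) (algebraMap ℤ ℚ).injective_int
    rw [← h1, hmq']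
    simp [Polynomial.map_comp]
  -- the translated generator also generates
  have hgen' : IntermediateField.adjoin ℚ {α - (m : K)} = ⊤ := by
    rw [eq_top_iff, ← hgen]
    rw [IntermediateField.adjoin_le_iff, Set.singleton_subset_iff]
    have h1 : α - (m : K) ∈ IntermediateField.adjoin ℚ {α - (m : K)} :=
      IntermediateField.mem_adjoin_simple_self ℚ _
    have h2 : (m : K) ∈ IntermediateField.adjoin ℚ {α - (m : K)} := by
      simpa using (IntermediateField.adjoin ℚ {α - (m : K)}).algebraMap_mem ((m : ℤ) : ℚ)
    simpa using add_mem h1 h2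
  -- power bases
  have mkPB : ∀ x : K, IntermediateField.adjoin ℚ {x} = ⊤ → ∃ B : PowerBasis ℚ K, B.gen = x := by
    intro x hx
    have hxi : IsIntegral ℚ x := IsIntegral.of_finite ℚ x
    refine ⟨(IntermediateField.adjoin.powerBasis hxi).map
      ((IntermediateField.equivOfEq hx).trans IntermediateField.topEquiv), ?_⟩
    simp [PowerBasis.map_gen, IntermediateField.adjoin.powerBasis_gen]
  obtain ⟨B, hB⟩ := mkPB α hgen
  obtain ⟨B', hB'⟩ := mkPB _ hgen'
  set A := Algebra.adjoin ℤ ({α} : Set K) with hA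
  have hmA : ∀ S : Subalgebra ℤ K, ((m : ℤ) : K) ∈ S := by
    intro S; simpa using S.algebraMap_mem m
  have hAA' : Algebra.adjoin ℤ ({α - (m : K)} : Set K) = A := by
    apply le_antisymm
    · rw [Algebra.adjoin_le_iff, Set.singleton_subset_iff]
      exact sub_mem (Algebra.self_mem_adjoin_singleton ℤ α) (hmA _)
    · rw [Algebra.adjoin_le_iff, Set.singleton_subset_iff]
      have h1 := Algebra.self_mem_adjoin_singleton ℤ (α - (m : K))
      simpa using add_mem h1 (hmA _)
  -- stripping a single prime
  have strip7 : ∀ z : K, IsIntegral ℤ z → (7 : ℤ) • z ∈ A → z ∈ A := by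
    intro z hz h
    rw [← hAA']
    have := mem_adjoin_of_smul_prime_smul_of_minpoly_isEisensteinAt (R := ℤ) (K := ℚ)
      (B := B') (by norm_num : Prime (7 : ℤ)) (hB' ▸ hαm_int) hz
      (by rw [hB', hAA']; exact h) (by rw [hB', hmz']; exact eis_comp r hr m hm hmod)
    rwa [hB'] at this
  have stripm : ∀ p : ℤ, Prime p → p ∣ m → ∀ z : K, IsIntegral ℤ z → p • z ∈ A → z ∈ A := by
    intro p hp hpm z hz h
    have hsq : ¬ p * p ∣ m := fun hc => hp.not_unit (hm p hc)
    have := mem_adjoin_of_smul_prime_smul_of_minpoly_isEisensteinAt (R := ℤ) (K := ℚ)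
      (B := B) hp (hB ▸ hα_int) hz (by rw [hB]; exact h)
      (by rw [hB, hmz]; exact eis_X_pow_sub_C hn0 hp hpm hsq)
    rwa [hB] at this
  have strip : ∀ p : ℤ, Prime p → (p ∣ m ∨ p = 7 ∨ p = -7) →
      ∀ z : K, IsIntegral ℤ z → p • z ∈ A → z ∈ A := by
    rintro p hp (hpm | rfl | rfl) z hz h
    · exact stripm p hp hpm z hz h
    · exact strip7 z hz h
    · refine strip7 z hz ?_
      have := neg_mem h
      rwa [← neg_smul, neg_neg] at this
  -- the induction over a factorization
  obtain ⟨C₀, hC₀⟩ : ∃ c : ℤ, c = (n : ℤ) ^ n * m ^ (n - 1) := ⟨_, rfl⟩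
  have hC₀0 : C₀ ≠ 0 := by
    rw [hC₀]
    exact mul_ne_zero (pow_ne_zero _ (by exact_mod_cast hn0)) (pow_ne_zero _ hm0)
  have key : ∀ c : ℤ, c ∣ C₀ → ∀ z : K, IsIntegral ℤ z → c • z ∈ A → z ∈ A := by
    intro c
    refine UniqueFactorizationMonoid.induction_on_prime c ?_ ?_ ?_
    · intro h; exact absurd (zero_dvd_iff.1 h) hC₀0
    · intro u hu _ z hz h
      rcases Int.isUnit_iff.1 hu with rfl | rfl
      · simpa using h
      · have := neg_mem h
        rwa [← neg_smul, neg_neg, one_smul] at this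
    · intro a p ha hp ih hdvd z hz h
      have hpC : p ∣ C₀ := dvd_trans (dvd_mul_right p a) hdvd
      have hgood : p ∣ m ∨ p = 7 ∨ p = -7 := by
        rw [hC₀] at hpC
        rcases hp.dvd_mul.1 hpC with h1 | h1
        · right
          have h2 : p ∣ (n : ℤ) := hp.dvd_of_dvd_pow h1
          have h3 : p ∣ (7 : ℤ) := by
            apply hp.dvd_of_dvd_pow (n := r)
            have : ((n : ℤ)) = (7 : ℤ) ^ r := by rw [hn_def]; push_cast; ring
            rwa [this] at h2
          have h4 : Associated p 7 :=
            (hp.dvd_prime_iff_associated (by norm_num)).1 h3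
          exact Int.associated_iff.1 h4
        · exact Or.inl (hp.dvd_of_dvd_pow h1)
      have haz_int : IsIntegral ℤ (a • z) := by
        rw [zsmul_eq_mul]
        have ha_int : IsIntegral ℤ ((a : ℤ) : K) := by
          simpa using isIntegral_algebraMap (R := ℤ) (A := K) (x := a)
        exact ha_int.mul hz
      have h2 : a • z ∈ A := by
        refine strip p hp hgood (a • z) haz_int ?_
        rwa [← mul_smul]
      exact ih (dvd_trans (dvd_mul_left a p) hdvd) z hz h2
  -- the discriminant bound
  have hdim : B.dim = n := by
    rw [← B.natDegree_minpoly, hB, hmq, natDegree_X_pow_sub_C]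
  have hrank : Module.finrank ℚ K = n := by rw [B.finrank, hdim]
  have hnorm : Algebra.norm ℚ α = (m : ℚ) := by
    have := Algebra.PowerBasis.norm_gen_eq_coeff_zero_minpoly B
    rw [hB, hdim, hmq] at this
    rw [this, coeff_sub, coeff_X_pow, if_neg (by omega), coeff_C, if_pos rfl]
    rw [hodd.neg_one_pow]
    ring
  have hdisc : Algebra.discr ℚ B.basis = (((-1 : ℤ) ^ (n * (n - 1) / 2) * C₀ : ℤ) : ℚ) := by
    rw [Algebra.discr_powerBasis_eq_norm, hB, hmq, hrank]
    have hder : derivative (R := ℚ) (X ^ n - C (m : ℚ)) = C (n : ℚ) * X ^ (n - 1) := by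
      rw [derivative_sub, derivative_C, derivative_X_pow, sub_zero]
    have h2 : Algebra.norm ℚ ((algebraMap ℚ K) (n : ℚ) * α ^ (n - 1)) =
        (n : ℚ) ^ n * (m : ℚ) ^ (n - 1) := by
      rw [map_mul, Algebra.norm_algebraMap, map_pow, hnorm, hrank]
    rw [hder, map_mul (aeval α), aeval_C, map_pow (aeval α), aeval_X, h2, hC₀]
    push_cast
    ring
  have hzmem : ∀ z : K, IsIntegral ℤ z → z ∈ A := by
    intro z hz
    have H := Algebra.discr_mul_isIntegral_mem_adjoin (R := ℤ) (K := ℚ) (B := B)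
      (hB ▸ hα_int) hz
    rw [hB, hdisc] at H
    rw [Int.cast_smul_eq_zsmul] at H
    have H2 : C₀ • z ∈ A := by
      have h3 := zsmul_mem H ((-1 : ℤ) ^ (n * (n - 1) / 2))
      rwa [← mul_smul, ← mul_assoc, ← pow_add, ← two_mul, pow_mul, neg_one_sq, one_pow,
        one_mul] at h3
    exact key C₀ dvd_rfl z hz H2
  -- conclude
  refine ⟨⟨α, hα_int⟩, ?_⟩
  rw [eq_top_iff]
  intro x _
  have hx : (x : K) ∈ A := hzmem _ (RingOfIntegers.isIntegral_coe x)
  have hmap : (Algebra.adjoin ℤ ({(⟨α, hα_int⟩ : 𝓞 K)} : Set (𝓞 K))).map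
      (algebraMap (𝓞 K) K).toIntAlgHom = A := by
    rw [AlgHom.map_adjoin]
    congr 1
    simp
    exact Set.image_singleton
  rw [← hmap] at hx
  obtain ⟨y, hy, hyx⟩ := hx
  have : y = x := RingOfIntegers.coe_injective hyx
  rwa [← this]
end
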